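/- For any property graphs G1 and G2, the graph edit distance GED(G1,G2) equals the minimum of cost(h) taken over all partial isomorphisms h between G1 and G2 (this minimum exists, since the empty partial map is a partial isomorphism). -/

import Mathlib

/-!
Property graphs, homomorphisms/isomorphisms/subgraphs, edit operations,
edit scripts, canonical scripts, graph edit distance, partial isomorphisms
and their cost, and the edit-script rewriting system of the paper
"Flexible graph matching and graph edit distance using answer set programming".
-/

universe u v w z

variable {ι : Type u} {L : Type v} {K : Type w} {D : Type z}

/-- A raw property-graph structure: finite sets of node and edge identifiers,
partial source/target/label functions (modelled via `Option`), and a partial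
key-value property assignment. -/
structure PreGraph (ι : Type u) (L : Type v) (K : Type w) (D : Type z) where
  V : Finset ι
  E : Finset ι
  src : ι → Option ι
  tgt : ι → Option ι
  lab : ι → Option L
  prop : ι → K → Option D

section Graphs

variable [DecidableEq ι]

/-- The invariants making a raw structure an actual property graph:
nodes and edges are disjoint, sources and targets are defined exactly on
edges and map into the node set, labels are defined exactly on nodes and
edges, and properties are defined only on nodes and edges. -/
structure IsPGraph (G : PreGraph ι L K D) : Prop where
  disj : Disjoint G.V G.E
  src_dom : ∀ e, (G.src e).isSome ↔ e ∈ G.E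
  tgt_dom : ∀ e, (G.tgt e).isSome ↔ e ∈ G.E
  src_mem : ∀ e v, G.src e = some v → v ∈ G.V
  tgt_mem : ∀ e v, G.tgt e = some v → v ∈ G.V
  lab_dom : ∀ x, (G.lab x).isSome ↔ x ∈ G.V ∪ G.E
  prop_dom : ∀ x k, (G.prop x k).isSome → x ∈ G.V ∪ G.E

/-- A homomorphism of property graphs (represented by a total function on
identifiers): maps nodes to nodes and edges to edges preserving labels,
sources, targets, and all defined properties. -/
structure IsHom (G1 G2 : PreGraph ι L K D) (h : ι → ι) : Prop where
  map_V : ∀ v ∈ G1.V, h v ∈ G2.V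
  map_E : ∀ e ∈ G1.E, h e ∈ G2.E
  lab_eq : ∀ x ∈ G1.V ∪ G1.E, G2.lab (h x) = G1.lab x
  src_eq : ∀ e ∈ G1.E, ∀ v, G1.src e = some v → G2.src (h e) = some (h v)
  tgt_eq : ∀ e ∈ G1.E, ∀ v, G1.tgt e = some v → G2.tgt (h e) = some (h v)
  prop_eq : ∀ x ∈ G1.V ∪ G1.E, ∀ k d, G1.prop x k = some d → G2.prop (h x) k = some d

/-- An isomorphism of property graphs: an invertible homomorphism whose
inverse is also a homomorphism. -/
def IsIso (G1 G2 : PreGraph ι L K D) (h : ι → ι) : Prop :=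
  IsHom G1 G2 h ∧ ∃ g : ι → ι, IsHom G2 G1 g ∧
    (∀ x ∈ G1.V ∪ G1.E, g (h x) = x) ∧ (∀ y ∈ G2.V ∪ G2.E, h (g y) = y)

/-- `G'` is a subgraph of `G`: `G'` is itself a property graph, its nodes and
edges are among those of `G`, and sources, targets, labels and defined
properties agree with those of `G`. -/
def IsSubgraph (G' G : PreGraph ι L K D) : Prop :=
  IsPGraph G' ∧ G'.V ⊆ G.V ∧ G'.E ⊆ G.E ∧
  (∀ e ∈ G'.E, G'.src e = G.src e ∧ G'.tgt e = G.tgt e) ∧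
  (∀ x ∈ G'.V ∪ G'.E, G'.lab x = G.lab x) ∧
  (∀ x k d, G'.prop x k = some d → G.prop x k = some d)

end Graphs

/-- The seven edit operations on property graphs. -/
inductive EditOp (ι : Type u) (L : Type v) (K : Type w) (D : Type z) where
  | insV (v : ι) (l : L)
  | insE (e v w : ι) (l : L)
  | insP (x : ι) (k : K) (d : D)
  | delV (v : ι)
  | delE (e : ι)
  | delP (x : ι) (k : K)
  | updP (x : ι) (k : K) (d : D)

section Edits

variable [DecidableEq ι] [DecidableEq K]

/-- The precondition of an edit operation on a graph. -/
def Applicable (op : EditOp ι L K D) (G : PreGraph ι L K D) : Prop :=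
  match op with
  | .insV v _ => v ∉ G.V ∪ G.E
  | .insE e v w _ => v ∈ G.V ∧ w ∈ G.V ∧ e ∉ G.V ∪ G.E
  | .insP x k _ => x ∈ G.V ∪ G.E ∧ G.prop x k = none
  | .delV v => v ∈ G.V ∧ (∀ e ∈ G.E, G.src e ≠ some v ∧ G.tgt e ≠ some v) ∧
      (∀ k, G.prop v k = none)
  | .delE e => e ∈ G.E ∧ (∀ k, G.prop e k = none)
  | .delP x k => (G.prop x k).isSome
  | .updP x k _ => (G.prop x k).isSome

/-- The effect of an edit operation on a graph. -/
def applyOp (op : EditOp ι L K D) (G : PreGraph ι L K D) : PreGraph ι L K D :=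
  match op with
  | .insV v l =>
      { G with
        V := (insert v G.V)
        lab := fun x => if x = v then some l else G.lab x }
  | .insE e v w l =>
      { G with
        E := (insert e G.E)
        src := fun x => if x = e then some v else G.src x
        tgt := fun x => if x = e then some w else G.tgt x
        lab := fun x => if x = e then some l else G.lab x }
  | .insP x k d =>
      { G with prop := fun y k' => if y = x ∧ k' = k then some d else G.prop y k' }
  | .delV v =>
      { G with
        V := (G.V.erase v)
        lab := fun x => if x = v then none else G.lab x }
  | .delE e =>
      { G with
        E := (G.E.erase e)
        src := fun x => if x = e then none else G.src x
        tgt := fun x => if x = e then none else G.tgt x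
        lab := fun x => if x = e then none else G.lab x }
  | .delP x k =>
      { G with prop := fun y k' => if y = x ∧ k' = k then none else G.prop y k' }
  | .updP x k d =>
      { G with prop := fun y k' => if y = x ∧ k' = k then some d else G.prop y k' }

/-- An edit script is valid on `G` if each operation is applicable in the
graph produced by the preceding ones. -/
inductive ValidScript : PreGraph ι L K D → List (EditOp ι L K D) → Prop where
  | nil (G : PreGraph ι L K D) : ValidScript G []
  | cons {G : PreGraph ι L K D} {op : EditOp ι L K D} {ops : List (EditOp ι L K D)} :
      Applicable op G → ValidScript (applyOp op G) ops → ValidScript G (op :: ops)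

/-- The result `ops(G)` of applying an edit script in order. -/
def applyScript (ops : List (EditOp ι L K D)) (G : PreGraph ι L K D) : PreGraph ι L K D :=
  ops.foldl (fun g op => applyOp op g) G

/-- A canonical edit script: property deletions, then edge deletions, then
node deletions, then property updates, then node insertions, then edge
insertions, then property insertions. -/
def Canonical (ops : List (EditOp ι L K D)) : Prop :=
  ∃ dp de dv up iv ie ip : List (EditOp ι L K D),
    ops = dp ++ de ++ dv ++ up ++ iv ++ ie ++ ip ∧
    (∀ op ∈ dp, ∃ x k, op = EditOp.delP x k) ∧
    (∀ op ∈ de, ∃ e, op = EditOp.delE e) ∧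
    (∀ op ∈ dv, ∃ v, op = EditOp.delV v) ∧
    (∀ op ∈ up, ∃ x k d, op = EditOp.updP x k d) ∧
    (∀ op ∈ iv, ∃ v l, op = EditOp.insV v l) ∧
    (∀ op ∈ ie, ∃ e v w l, op = EditOp.insE e v w l) ∧
    (∀ op ∈ ip, ∃ x k d, op = EditOp.insP x k d)

/-- The set of lengths of valid edit scripts transforming `G1` into a graph
isomorphic to `G2`. -/
def GEDSet (G1 G2 : PreGraph ι L K D) : Set ℕ :=
  {n | ∃ ops : List (EditOp ι L K D), ValidScript G1 ops ∧
        (∃ f : ι → ι, IsIso (applyScript ops G1) G2 f) ∧ ops.length = n}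

/-- The graph edit distance: the minimum length of a valid edit script
transforming `G1` into a graph isomorphic to `G2`. -/
noncomputable def GED (G1 G2 : PreGraph ι L K D) : ℕ :=
  sInf (GEDSet G1 G2)

/-- The number of defined properties of a graph. -/
def propCount [Fintype K] (G : PreGraph ι L K D) : ℕ :=
  ∑ x ∈ G.V ∪ G.E, (Finset.univ.filter fun k : K => (G.prop x k).isSome).card

end Edits

/-- A possibly-marked edit operation: the boolean records whether the
operation is marked (`op*`). -/
abbrev MOp (ι : Type u) (L : Type v) (K : Type w) (D : Type z) :=
  EditOp ι L K D × Bool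

/-- The edit-script rewrite rules of Figure 5 of the paper, acting on the
marked operation and the operation immediately following it. -/
inductive RewStep : List (MOp ι L K D) → List (MOp ι L K D) → Prop where
  | delE_delP (e x : ι) (k : K) :
      RewStep [(.delE e, true), (.delP x k, false)] [(.delP x k, false), (.delE e, true)]
  | delV_delP (v x : ι) (k : K) :
      RewStep [(.delV v, true), (.delP x k, false)] [(.delP x k, false), (.delV v, true)]
  | delV_delE (v e : ι) :
      RewStep [(.delV v, true), (.delE e, false)] [(.delE e, false), (.delV v, true)]
  | updP_delP_same (x : ι) (k : K) (d : D) :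
      RewStep [(.updP x k d, true), (.delP x k, false)] [(.delP x k, false)]
  | updP_delP_ne (x y : ι) (k k' : K) (d : D) (h : ¬(x = y ∧ k = k')) :
      RewStep [(.updP x k d, true), (.delP y k', false)]
        [(.delP y k', false), (.updP x k d, true)]
  | updP_delE (x : ι) (k : K) (d : D) (e : ι) :
      RewStep [(.updP x k d, true), (.delE e, false)] [(.delE e, false), (.updP x k d, true)]
  | updP_delV (x : ι) (k : K) (d : D) (v : ι) :
      RewStep [(.updP x k d, true), (.delV v, false)] [(.delV v, false), (.updP x k d, true)]
  | insV_delP (v : ι) (l : L) (x : ι) (k : K) :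
      RewStep [(.insV v l, true), (.delP x k, false)] [(.delP x k, false), (.insV v l, true)]
  | insV_delE (v : ι) (l : L) (e : ι) :
      RewStep [(.insV v l, true), (.delE e, false)] [(.delE e, false), (.insV v l, true)]
  | insV_delV_same (v : ι) (l : L) :
      RewStep [(.insV v l, true), (.delV v, false)] []
  | insV_delV_ne (v : ι) (l : L) (v' : ι) (h : v ≠ v') :
      RewStep [(.insV v l, true), (.delV v', false)] [(.delV v', false), (.insV v l, true)]
  | insV_updP (v : ι) (l : L) (x : ι) (k : K) (d : D) :
      RewStep [(.insV v l, true), (.updP x k d, false)]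
        [(.updP x k d, false), (.insV v l, true)]
  | insE_delP (e v w : ι) (l : L) (x : ι) (k : K) :
      RewStep [(.insE e v w l, true), (.delP x k, false)]
        [(.delP x k, false), (.insE e v w l, true)]
  | insE_delE_same (e v w : ι) (l : L) :
      RewStep [(.insE e v w l, true), (.delE e, false)] []
  | insE_delE_ne (e v w : ι) (l : L) (e' : ι) (h : e ≠ e') :
      RewStep [(.insE e v w l, true), (.delE e', false)]
        [(.delE e', false), (.insE e v w l, true)]
  | insE_delV (e v w : ι) (l : L) (v' : ι) :
      RewStep [(.insE e v w l, true), (.delV v', false)]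
        [(.delV v', false), (.insE e v w l, true)]
  | insE_updP (e v w : ι) (l : L) (x : ι) (k : K) (d : D) :
      RewStep [(.insE e v w l, true), (.updP x k d, false)]
        [(.updP x k d, false), (.insE e v w l, true)]
  | insE_insV (e v w : ι) (l : L) (v' : ι) (l' : L) :
      RewStep [(.insE e v w l, true), (.insV v' l', false)]
        [(.insV v' l', false), (.insE e v w l, true)]
  | insP_delP_same (x : ι) (k : K) (d : D) :
      RewStep [(.insP x k d, true), (.delP x k, false)] []
  | insP_delP_ne (x y : ι) (k k' : K) (d : D) (h : ¬(x = y ∧ k = k')) :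
      RewStep [(.insP x k d, true), (.delP y k', false)]
        [(.delP y k', false), (.insP x k d, true)]
  | insP_delE (x : ι) (k : K) (d : D) (e : ι) :
      RewStep [(.insP x k d, true), (.delE e, false)] [(.delE e, false), (.insP x k d, true)]
  | insP_delV (x : ι) (k : K) (d : D) (v : ι) :
      RewStep [(.insP x k d, true), (.delV v, false)] [(.delV v, false), (.insP x k d, true)]
  | insP_updP_same (x : ι) (k : K) (d d' : D) :
      RewStep [(.insP x k d, true), (.updP x k d', false)] [(.insP x k d', true)]
  | insP_updP_ne (x y : ι) (k k' : K) (d d' : D) (h : ¬(x = y ∧ k = k')) :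
      RewStep [(.insP x k d, true), (.updP y k' d', false)]
        [(.updP y k' d', false), (.insP x k d, true)]
  | insP_insV (x : ι) (k : K) (d : D) (v : ι) (l : L) :
      RewStep [(.insP x k d, true), (.insV v l, false)] [(.insV v l, false), (.insP x k d, true)]
  | insP_insE (x : ι) (k : K) (d : D) (e v w : ι) (l : L) :
      RewStep [(.insP x k d, true), (.insE e v w l, false)]
        [(.insE e v w l, false), (.insP x k d, true)]
  | unmark (op : EditOp ι L K D) :
      RewStep [(op, true)] [(op, false)]

/-- One rewrite step on a marked edit script: apply one of the rules at the
position of the marked operation (everything before it is unmarked). -/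
def Rew (m m' : List (MOp ι L K D)) : Prop :=
  ∃ pre a b post : List (MOp ι L K D),
    (∀ p ∈ pre, p.2 = false) ∧ RewStep a b ∧ m = pre ++ a ++ post ∧ m' = pre ++ b ++ post

/-- The `*`-length of a marked script: the length of the suffix beginning at
the (first) marked operation, or `0` if there is none. -/
def starLen : List (MOp ι L K D) → ℕ
  | [] => 0
  | (_, b) :: rest => if b then rest.length + 1 else starLen rest

section PartialIso

variable [DecidableEq ι]

/-- A partial isomorphism between two property graphs, represented as a
partial map on identifiers: injective, matching nodes to nodes and edges to
edges with equal labels, and matching the endpoints of matched edges. -/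
def IsPartialIso (G1 G2 : PreGraph ι L K D) (h : ι → Option ι) : Prop :=
  (∀ x y, h x = some y → (x ∈ G1.V ∧ y ∈ G2.V) ∨ (x ∈ G1.E ∧ y ∈ G2.E)) ∧
  (∀ x x' y, h x = some y → h x' = some y → x = x') ∧
  (∀ x y, h x = some y → G2.lab y = G1.lab x) ∧
  (∀ e e' v, h e = some e' → G1.src e = some v → h v = G2.src e') ∧
  (∀ e e' v, h e = some e' → G1.tgt e = some v → h v = G2.tgt e')

/-- The nodes and edges of `G1` left unmatched by `h`. -/
def unmatchedL (G1 : PreGraph ι L K D) (h : ι → Option ι) : Finset ι :=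
  (G1.V ∪ G1.E).filter fun x => h x = none

/-- The nodes and edges of `G2` left unmatched by `h`. -/
def unmatchedR (G1 G2 : PreGraph ι L K D) (h : ι → Option ι) : Finset ι :=
  (G2.V ∪ G2.E).filter fun y => ∀ x ∈ G1.V ∪ G1.E, h x ≠ some y

/-- The number of defined properties on a given object of a graph. -/
def propsOn [Fintype K] (G : PreGraph ι L K D) (x : ι) : ℕ :=
  (Finset.univ.filter fun k : K => (G.prop x k).isSome).card

/-- The number of keys at which the properties of a matched pair disagree
(defined with different values, or defined on only one side). -/
def mismatchCount [Fintype K] [DecidableEq D] (G1 G2 : PreGraph ι L K D) (x y : ι) : ℕ :=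
  (Finset.univ.filter fun k : K => G1.prop x k ≠ G2.prop y k).card

/-- The cost of a partial isomorphism: unmatched nodes and edges on both
sides, mismatched properties of matched pairs, and all properties on
unmatched objects of both sides. -/
def pisoCost [Fintype K] [DecidableEq D] (G1 G2 : PreGraph ι L K D) (h : ι → Option ι) : ℕ :=
  (unmatchedL G1 h).card + (unmatchedR G1 G2 h).card +
  (∑ x ∈ G1.V ∪ G1.E, (h x).elim 0 fun y => mismatchCount G1 G2 x y) +
  (∑ x ∈ unmatchedL G1 h, propsOn G1 x) +
  (∑ y ∈ unmatchedR G1 G2 h, propsOn G2 y)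

end PartialIso

section Proofs

open Finset

set_option linter.unusedSectionVars false

variable [DecidableEq ι] [DecidableEq K]

lemma prop_none_of_not_mem {G : PreGraph ι L K D} (hG : IsPGraph G) {x : ι}
    (hx : x ∉ G.V ∪ G.E) (k : K) : G.prop x k = none := by
  by_contra hc
  exact hx (hG.prop_dom x k (Option.isSome_iff_ne_none.mpr hc))

lemma applyOp_isPGraph {G : PreGraph ι L K D} {op : EditOp ι L K D}
    (hG : IsPGraph G) (hap : Applicable op G) : IsPGraph (applyOp op G) := by
  cases op with
  | insV v l =>
    simp only [Applicable, Finset.mem_union, not_or] at hap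
    refine ⟨?_, hG.src_dom, hG.tgt_dom, ?_, ?_, ?_, ?_⟩
    · rw [Finset.disjoint_left]
      intro a ha hb
      rcases Finset.mem_insert.mp ha with rfl | ha
      · exact hap.2 hb
      · exact (Finset.disjoint_left.mp hG.disj) ha hb
    · intro e u he; exact Finset.mem_insert_of_mem (hG.src_mem e u he)
    · intro e u he; exact Finset.mem_insert_of_mem (hG.tgt_mem e u he)
    · intro x
      simp only [applyOp]
      by_cases hx : x = v
      · subst hx; simp
      · simp only [if_neg hx]
        rw [hG.lab_dom]
        simp [hx, Finset.mem_insert]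
    · intro x k hk
      simp only [applyOp] at hk ⊢
      have := hG.prop_dom x k hk
      simp only [Finset.mem_union, Finset.mem_insert] at this ⊢
      tauto
  | insE e v w l =>
    obtain ⟨hv, hw, he⟩ := hap
    simp only [Finset.mem_union, not_or] at he
    refine ⟨?_, ?_, ?_, ?_, ?_, ?_, ?_⟩
    · rw [Finset.disjoint_left]
      intro a ha hb
      rcases Finset.mem_insert.mp hb with rfl | hb
      · exact he.1 ha
      · exact (Finset.disjoint_left.mp hG.disj) ha hb
    · intro x
      simp only [applyOp]
      by_cases hx : x = e
      · subst hx; simp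
      · simp only [if_neg hx]; rw [hG.src_dom]; simp [hx]
    · intro x
      simp only [applyOp]
      by_cases hx : x = e
      · subst hx; simp
      · simp only [if_neg hx]; rw [hG.tgt_dom]; simp [hx]
    · intro x u hx
      simp only [applyOp] at hx
      by_cases hxe : x = e
      · rw [if_pos hxe] at hx; cases hx; exact hv
      · rw [if_neg hxe] at hx; exact hG.src_mem x u hx
    · intro x u hx
      simp only [applyOp] at hx
      by_cases hxe : x = e
      · rw [if_pos hxe] at hx; cases hx; exact hw
      · rw [if_neg hxe] at hx; exact hG.tgt_mem x u hx
    · intro x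
      simp only [applyOp]
      by_cases hx : x = e
      · subst hx; simp
      · simp only [if_neg hx]
        rw [hG.lab_dom]
        simp only [Finset.mem_union, Finset.mem_insert]
        tauto
    · intro x k hk
      simp only [applyOp] at hk ⊢
      have := hG.prop_dom x k hk
      simp only [Finset.mem_union, Finset.mem_insert] at this ⊢
      tauto
  | insP x k d =>
    obtain ⟨hx, -⟩ := hap
    refine ⟨hG.disj, hG.src_dom, hG.tgt_dom, hG.src_mem, hG.tgt_mem, hG.lab_dom, ?_⟩
    intro y k' hk
    simp only [applyOp] at hk
    by_cases hy : y = x ∧ k' = k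
    · exact hy.1 ▸ hx
    · rw [if_neg hy] at hk; exact hG.prop_dom y k' hk
  | delV v =>
    obtain ⟨hv, hinc, hprops⟩ := hap
    refine ⟨?_, hG.src_dom, hG.tgt_dom, ?_, ?_, ?_, ?_⟩
    · exact Finset.disjoint_of_subset_left (Finset.erase_subset _ _) hG.disj
    · intro e u he
      simp only [applyOp] at he
      refine Finset.mem_erase.mpr ⟨?_, hG.src_mem e u he⟩
      rintro rfl
      have heE : e ∈ G.E := (hG.src_dom e).mp (by rw [he]; rfl)
      exact (hinc e heE).1 he
    · intro e u he
      simp only [applyOp] at he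
      refine Finset.mem_erase.mpr ⟨?_, hG.tgt_mem e u he⟩
      rintro rfl
      have heE : e ∈ G.E := (hG.tgt_dom e).mp (by rw [he]; rfl)
      exact (hinc e heE).2 he
    · intro x
      simp only [applyOp]
      by_cases hx : x = v
      · subst hx
        simp only [if_pos rfl, Option.isSome_none]
        constructor
        · intro hc; exact absurd hc (by simp)
        · intro hc
          rcases Finset.mem_union.mp hc with hc | hc
          · exact absurd (Finset.mem_erase.mp hc).1 (by simp)
          · exact absurd hc (Finset.disjoint_left.mp hG.disj hv)
      · simp only [if_neg hx]
        rw [hG.lab_dom]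
        simp [Finset.mem_erase, hx]
    · intro x k hk
      simp only [applyOp] at hk ⊢
      have hmem := hG.prop_dom x k hk
      by_cases hx : x = v
      · subst hx; rw [hprops k] at hk; exact absurd hk (by simp)
      · simp only [Finset.mem_union, Finset.mem_erase] at hmem ⊢
        tauto
  | delE e =>
    obtain ⟨he, hprops⟩ := hap
    refine ⟨?_, ?_, ?_, ?_, ?_, ?_, ?_⟩
    · exact Finset.disjoint_of_subset_right (Finset.erase_subset _ _) hG.disj
    · intro x
      simp only [applyOp]
      by_cases hx : x = e
      · subst hx; simp
      · simp only [if_neg hx]; rw [hG.src_dom]; simp [Finset.mem_erase, hx]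
    · intro x
      simp only [applyOp]
      by_cases hx : x = e
      · subst hx; simp
      · simp only [if_neg hx]; rw [hG.tgt_dom]; simp [Finset.mem_erase, hx]
    · intro x u hx
      simp only [applyOp] at hx
      by_cases hxe : x = e
      · rw [if_pos hxe] at hx; exact absurd hx (by simp)
      · rw [if_neg hxe] at hx; exact hG.src_mem x u hx
    · intro x u hx
      simp only [applyOp] at hx
      by_cases hxe : x = e
      · rw [if_pos hxe] at hx; exact absurd hx (by simp)
      · rw [if_neg hxe] at hx; exact hG.tgt_mem x u hx
    · intro x
      simp only [applyOp]
      by_cases hx : x = e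
      · subst hx
        simp only [if_pos rfl, Option.isSome_none]
        constructor
        · intro hc; exact absurd hc (by simp)
        · intro hc
          rcases Finset.mem_union.mp hc with hc | hc
          · exact absurd hc (Finset.disjoint_right.mp hG.disj he)
          · exact absurd (Finset.mem_erase.mp hc).1 (by simp)
      · simp only [if_neg hx]
        rw [hG.lab_dom]
        simp [Finset.mem_erase, hx]
    · intro x k hk
      simp only [applyOp] at hk ⊢
      have hmem := hG.prop_dom x k hk
      by_cases hx : x = e
      · subst hx; rw [hprops k] at hk; exact absurd hk (by simp)
      · simp only [Finset.mem_union, Finset.mem_erase] at hmem ⊢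
        tauto
  | delP x k =>
    refine ⟨hG.disj, hG.src_dom, hG.tgt_dom, hG.src_mem, hG.tgt_mem, hG.lab_dom, ?_⟩
    intro y k' hk
    simp only [applyOp] at hk
    by_cases hy : y = x ∧ k' = k
    · rw [if_pos hy] at hk; exact absurd hk (by simp)
    · rw [if_neg hy] at hk; exact hG.prop_dom y k' hk
  | updP x k d =>
    have hx : x ∈ G.V ∪ G.E := hG.prop_dom x k hap
    refine ⟨hG.disj, hG.src_dom, hG.tgt_dom, hG.src_mem, hG.tgt_mem, hG.lab_dom, ?_⟩
    intro y k' hk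
    simp only [applyOp] at hk
    by_cases hy : y = x ∧ k' = k
    · exact hy.1 ▸ hx
    · rw [if_neg hy] at hk; exact hG.prop_dom y k' hk


variable [Fintype K] [DecidableEq D]

lemma filter_card_succ {p q : K → Prop} [DecidablePred p] [DecidablePred q] (k : K)
    (hpq : ∀ k', k' ≠ k → (p k' ↔ q k')) (hk : ¬ p k) (hk' : q k) :
    (Finset.univ.filter p).card + 1 = (Finset.univ.filter q).card := by
  have he : Finset.univ.filter q = insert k (Finset.univ.filter p) := by
    ext a
    by_cases ha : a = k
    · subst ha; simp [hk', hk]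
    · simp [ha, (hpq a ha).symm]
  rw [he, Finset.card_insert_of_notMem (by simp [hk])]

lemma filter_card_le {p q : K → Prop} [DecidablePred p] [DecidablePred q] (k : K)
    (hpq : ∀ k', k' ≠ k → (p k' → q k')) :
    (Finset.univ.filter p).card ≤ (Finset.univ.filter q).card + 1 := by
  have hsub : Finset.univ.filter p ⊆ insert k (Finset.univ.filter q) := by
    intro a ha
    simp only [Finset.mem_filter, Finset.mem_univ, true_and] at ha
    by_cases hak : a = k
    · simp [hak]
    · exact Finset.mem_insert_of_mem (by simp [hpq a hak ha])
  calc (Finset.univ.filter p).card ≤ (insert k (Finset.univ.filter q)).card :=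
        Finset.card_le_card hsub
    _ ≤ _ := Finset.card_insert_le _ _

lemma mismatchCount_eq_zero_iff {G G2 : PreGraph ι L K D} {x y : ι} :
    mismatchCount G G2 x y = 0 ↔ ∀ k, G.prop x k = G2.prop y k := by
  unfold mismatchCount
  rw [Finset.card_eq_zero, Finset.filter_eq_empty_iff]
  simp

lemma piso_of_iso {G G2 : PreGraph ι L K D} (hG : IsPGraph G) (hG2 : IsPGraph G2)
    {f : ι → ι} (hf : IsIso G G2 f) :
    ∃ h : ι → Option ι, IsPartialIso G G2 h ∧ pisoCost G G2 h = 0 := by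
  obtain ⟨hfh, g, hgh, hgf, hfg⟩ := hf
  set h : ι → Option ι := fun x => if x ∈ G.V ∪ G.E then some (f x) else none with hh
  have hsome : ∀ x ∈ G.V ∪ G.E, h x = some (f x) := by
    intro x hx; simp only [hh]; rw [if_pos hx]
  have hdom : ∀ x y, h x = some y → x ∈ G.V ∪ G.E ∧ y = f x := by
    intro x y hxy
    by_cases hx : x ∈ G.V ∪ G.E
    · rw [hsome x hx] at hxy; exact ⟨hx, (Option.some_inj.mp hxy).symm⟩
    · simp only [hh] at hxy
      rw [if_neg hx] at hxy
      exact absurd hxy (by simp)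
  have hpropeq : ∀ x ∈ G.V ∪ G.E, ∀ k, G.prop x k = G2.prop (f x) k := by
    intro x hx k
    cases hp : G.prop x k with
    | some d => exact (hfh.prop_eq x hx k d hp).symm
    | none =>
      by_contra hc
      cases hp2 : G2.prop (f x) k with
      | none => rw [hp2] at hc; exact hc rfl
      | some d =>
        have hfx : f x ∈ G2.V ∪ G2.E := by
          rcases Finset.mem_union.mp hx with hx' | hx'
          · exact Finset.mem_union_left _ (hfh.map_V x hx')
          · exact Finset.mem_union_right _ (hfh.map_E x hx')
        have := hgh.prop_eq (f x) hfx k d hp2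
        rw [hgf x hx] at this
        rw [hp] at this; exact (nomatch this)
  refine ⟨h, ⟨?_, ?_, ?_, ?_, ?_⟩, ?_⟩
  · intro x y hxy
    obtain ⟨hx, rfl⟩ := hdom x y hxy
    rcases Finset.mem_union.mp hx with hx' | hx'
    · exact Or.inl ⟨hx', hfh.map_V x hx'⟩
    · exact Or.inr ⟨hx', hfh.map_E x hx'⟩
  · intro x x' y hxy hx'y
    obtain ⟨hx, rfl⟩ := hdom x y hxy
    obtain ⟨hx', hfeq⟩ := hdom x' (f x) hx'y
    have := congrArg g hfeq
    rw [hgf x hx, hgf x' hx'] at this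
    exact this
  · intro x y hxy
    obtain ⟨hx, rfl⟩ := hdom x y hxy
    exact hfh.lab_eq x hx
  · intro e e' v hee' hsrc
    obtain ⟨he, rfl⟩ := hdom e e' hee'
    have heE : e ∈ G.E := by
      rcases Finset.mem_union.mp he with he' | he'
      · exfalso
        have := (hG.src_dom e).mp (by rw [hsrc]; rfl)
        exact Finset.disjoint_left.mp hG.disj he' this
      · exact he'
    have hv : v ∈ G.V := hG.src_mem e v hsrc
    rw [hsome v (Finset.mem_union_left _ hv), hfh.src_eq e heE v hsrc]
  · intro e e' v hee' htgt
    obtain ⟨he, rfl⟩ := hdom e e' hee'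
    have heE : e ∈ G.E := by
      rcases Finset.mem_union.mp he with he' | he'
      · exfalso
        have := (hG.tgt_dom e).mp (by rw [htgt]; rfl)
        exact Finset.disjoint_left.mp hG.disj he' this
      · exact he'
    have hv : v ∈ G.V := hG.tgt_mem e v htgt
    rw [hsome v (Finset.mem_union_left _ hv), hfh.tgt_eq e heE v htgt]
  · have hL : unmatchedL G h = ∅ := by
      apply Finset.eq_empty_of_forall_notMem
      intro x hx
      simp only [unmatchedL, Finset.mem_filter] at hx
      rw [hsome x hx.1] at hx
      exact nomatch hx.2
    have hR : unmatchedR G G2 h = ∅ := by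
      apply Finset.eq_empty_of_forall_notMem
      intro y hy
      simp only [unmatchedR, Finset.mem_filter] at hy
      have hgy : g y ∈ G.V ∪ G.E := by
        rcases Finset.mem_union.mp hy.1 with hy' | hy'
        · exact Finset.mem_union_left _ (hgh.map_V y hy')
        · exact Finset.mem_union_right _ (hgh.map_E y hy')
      exact hy.2 (g y) hgy (by rw [hsome (g y) hgy, hfg y hy.1])
    unfold pisoCost
    rw [hL, hR]
    simp only [Finset.card_empty, Finset.sum_empty, add_zero, zero_add]
    apply Finset.sum_eq_zero
    intro x hx
    rw [hsome x hx]
    simp only [Option.elim_some]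
    exact mismatchCount_eq_zero_iff.mpr (hpropeq x hx)

lemma iso_of_piso_cost_zero {G G2 : PreGraph ι L K D} (hG : IsPGraph G) (hG2 : IsPGraph G2)
    {h : ι → Option ι} (hpi : IsPartialIso G G2 h) (hc : pisoCost G G2 h = 0) :
    ∃ f : ι → ι, IsIso G G2 f := by
  obtain ⟨hdom, hinj, hlab, hsrc, htgt⟩ := hpi
  unfold pisoCost at hc
  have hA : (unmatchedL G h).card = 0 := by omega
  have hB : (unmatchedR G G2 h).card = 0 := by omega
  have hC : (∑ x ∈ G.V ∪ G.E, (h x).elim 0 fun y => mismatchCount G G2 x y) = 0 := by omega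
  rw [Finset.card_eq_zero] at hA hB
  set f : ι → ι := fun x => (h x).getD x with hf
  have hmatch : ∀ x ∈ G.V ∪ G.E, h x = some (f x) := by
    intro x hx
    have hne : h x ≠ none := by
      intro hn
      have : x ∈ unmatchedL G h := by
        simp only [unmatchedL, Finset.mem_filter]; exact ⟨hx, hn⟩
      rw [hA] at this; exact absurd this (Finset.notMem_empty x)
    obtain ⟨y, hy⟩ := Option.ne_none_iff_exists'.mp hne
    rw [hy]; simp [hf, hy]
  have hmis : ∀ x ∈ G.V ∪ G.E, ∀ k, G.prop x k = G2.prop (f x) k := by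
    intro x hx k
    have := (Finset.sum_eq_zero_iff.mp hC) x hx
    rw [hmatch x hx] at this
    simp only [Option.elim_some] at this
    exact mismatchCount_eq_zero_iff.mp this k
  have hfmem : ∀ x, (x ∈ G.V → f x ∈ G2.V) ∧ (x ∈ G.E → f x ∈ G2.E) := by
    intro x
    constructor
    · intro hx
      rcases hdom x (f x) (hmatch x (Finset.mem_union_left _ hx)) with ⟨_, h2⟩ | ⟨h1, _⟩
      · exact h2
      · exact absurd h1 (Finset.disjoint_left.mp hG.disj hx)
    · intro hx
      rcases hdom x (f x) (hmatch x (Finset.mem_union_right _ hx)) with ⟨h1, _⟩ | ⟨_, h2⟩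
      · exact absurd hx (Finset.disjoint_left.mp hG.disj h1)
      · exact h2
  have hex : ∀ y ∈ G2.V ∪ G2.E, ∃ x, x ∈ G.V ∪ G.E ∧ h x = some y := by
    intro y hy
    by_contra hne
    push_neg at hne
    have : y ∈ unmatchedR G G2 h := by
      simp only [unmatchedR, Finset.mem_filter]; exact ⟨hy, fun x hx => hne x hx⟩
    rw [hB] at this; exact absurd this (Finset.notMem_empty y)
  classical
  set g : ι → ι := fun y =>
    if hy : ∃ x, x ∈ G.V ∪ G.E ∧ h x = some y then hy.choose else y with hg
  have hgspec : ∀ y ∈ G2.V ∪ G2.E, g y ∈ G.V ∪ G.E ∧ h (g y) = some y := by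
    intro y hy
    have hy' := hex y hy
    simp only [hg, dif_pos hy']
    exact hy'.choose_spec
  have hgmem : ∀ y, (y ∈ G2.V → g y ∈ G.V) ∧ (y ∈ G2.E → g y ∈ G.E) := by
    intro y
    constructor
    · intro hy
      obtain ⟨hgy, hgh⟩ := hgspec y (Finset.mem_union_left _ hy)
      rcases hdom (g y) y hgh with ⟨h1, _⟩ | ⟨_, h2⟩
      · exact h1
      · exact absurd h2 (Finset.disjoint_left.mp hG2.disj hy)
    · intro hy
      obtain ⟨hgy, hgh⟩ := hgspec y (Finset.mem_union_right _ hy)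
      rcases hdom (g y) y hgh with ⟨_, h2⟩ | ⟨h1, _⟩
      · exact absurd hy (Finset.disjoint_left.mp hG2.disj h2)
      · exact h1
  have hgf : ∀ x ∈ G.V ∪ G.E, g (f x) = x := by
    intro x hx
    have hfx : f x ∈ G2.V ∪ G2.E := by
      rcases Finset.mem_union.mp hx with hx' | hx'
      · exact Finset.mem_union_left _ ((hfmem x).1 hx')
      · exact Finset.mem_union_right _ ((hfmem x).2 hx')
    obtain ⟨_, hgh'⟩ := hgspec (f x) hfx
    exact hinj (g (f x)) x (f x) hgh' (hmatch x hx)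
  have hfg : ∀ y ∈ G2.V ∪ G2.E, f (g y) = y := by
    intro y hy
    obtain ⟨hgy, hgh'⟩ := hgspec y hy
    simp [hf, hgh']
  refine ⟨f, ⟨?_, ?_, ?_, ?_, ?_, ?_⟩, g, ⟨?_, ?_, ?_, ?_, ?_, ?_⟩, hgf, hfg⟩
  · intro v hv; exact (hfmem v).1 hv
  · intro e he; exact (hfmem e).2 he
  · intro x hx; exact hlab x (f x) (hmatch x hx)
  · intro e he v hv
    have hveq := hsrc e (f e) v (hmatch e (Finset.mem_union_right _ he)) hv
    have hvV : v ∈ G.V := hG.src_mem e v hv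
    rw [hmatch v (Finset.mem_union_left _ hvV)] at hveq
    exact hveq.symm
  · intro e he v hv
    have hveq := htgt e (f e) v (hmatch e (Finset.mem_union_right _ he)) hv
    have hvV : v ∈ G.V := hG.tgt_mem e v hv
    rw [hmatch v (Finset.mem_union_left _ hvV)] at hveq
    exact hveq.symm
  · intro x hx k d hd
    rw [← hmis x hx k]; exact hd
  · intro v hv; exact (hgmem v).1 hv
  · intro e he; exact (hgmem e).2 he
  · intro y hy
    exact (hlab (g y) y (hgspec y hy).2).symm
  · intro e he v hv
    obtain ⟨hge, hgeh⟩ := hgspec e (Finset.mem_union_right _ he)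
    have hgeE : g e ∈ G.E := (hgmem e).2 he
    have hsome : (G.src (g e)).isSome := (hG.src_dom (g e)).mpr hgeE
    obtain ⟨u, hu⟩ := Option.isSome_iff_exists.mp hsome
    have huV : u ∈ G.V := hG.src_mem (g e) u hu
    have := hsrc (g e) e u hgeh hu
    rw [hv] at this
    rw [hmatch u (Finset.mem_union_left _ huV)] at this
    obtain ⟨hgv, hgvh⟩ := hgspec v (Finset.mem_union_left _ (hG2.src_mem e v hv))
    have : u = g v := hinj u (g v) v (by rw [← this]; exact (hmatch u (Finset.mem_union_left _ huV))) hgvh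
    rw [hu, this]
  · intro e he v hv
    obtain ⟨hge, hgeh⟩ := hgspec e (Finset.mem_union_right _ he)
    have hgeE : g e ∈ G.E := (hgmem e).2 he
    have hsome : (G.tgt (g e)).isSome := (hG.tgt_dom (g e)).mpr hgeE
    obtain ⟨u, hu⟩ := Option.isSome_iff_exists.mp hsome
    have huV : u ∈ G.V := hG.tgt_mem (g e) u hu
    have := htgt (g e) e u hgeh hu
    rw [hv] at this
    rw [hmatch u (Finset.mem_union_left _ huV)] at this
    obtain ⟨hgv, hgvh⟩ := hgspec v (Finset.mem_union_left _ (hG2.tgt_mem e v hv))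
    have : u = g v := hinj u (g v) v (by rw [← this]; exact (hmatch u (Finset.mem_union_left _ huV))) hgvh
    rw [hu, this]
  · intro y hy k d hd
    have h1 := hmis (g y) (hgspec y hy).1 k
    rw [show f (g y) = y from hfg y hy] at h1
    rw [h1, hd]

lemma mem_unmatchedL {G : PreGraph ι L K D} {h : ι → Option ι} {x : ι} :
    x ∈ unmatchedL G h ↔ x ∈ G.V ∪ G.E ∧ h x = none := by
  unfold unmatchedL; exact Finset.mem_filter

lemma mem_unmatchedR {G G2 : PreGraph ι L K D} {h : ι → Option ι} {y : ι} :
    y ∈ unmatchedR G G2 h ↔ y ∈ G2.V ∪ G2.E ∧ ∀ x ∈ G.V ∪ G.E, h x ≠ some y := by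
  unfold unmatchedR; exact Finset.mem_filter

lemma propsOn_eq_zero {G : PreGraph ι L K D} {x : ι} (h0 : ∀ k, G.prop x k = none) :
    propsOn G x = 0 := by
  unfold propsOn
  rw [Finset.card_eq_zero, Finset.filter_eq_empty_iff]
  intro k _
  simp [h0 k]

lemma mismatch_left_none {G G2 : PreGraph ι L K D} {x y : ι}
    (h0 : ∀ k, G.prop x k = none) : mismatchCount G G2 x y = propsOn G2 y := by
  unfold mismatchCount propsOn
  congr 1
  apply Finset.filter_congr
  intro k _
  rw [h0 k]
  cases G2.prop y k <;> simp

lemma sum_le_sum_add_one {s : Finset ι} {f g : ι → ℕ} (x : ι)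
    (hfg : ∀ y ∈ s, y ≠ x → f y = g y) (hx : f x ≤ g x + 1) :
    ∑ y ∈ s, f y ≤ (∑ y ∈ s, g y) + 1 := by
  by_cases hxs : x ∈ s
  · rw [← Finset.add_sum_erase s f hxs, ← Finset.add_sum_erase s g hxs]
    have he : ∑ y ∈ s.erase x, f y = ∑ y ∈ s.erase x, g y :=
      Finset.sum_congr rfl fun y hy =>
        hfg y (Finset.mem_of_mem_erase hy) (Finset.ne_of_mem_erase hy)
    omega
  · have he : ∑ y ∈ s, f y = ∑ y ∈ s, g y :=
      Finset.sum_congr rfl fun y hy => hfg y hy (fun h => hxs (h ▸ hy))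
    omega

lemma sum_add_one_eq {s : Finset ι} {f g : ι → ℕ} {x : ι} (hxs : x ∈ s)
    (hfg : ∀ y ∈ s, y ≠ x → f y = g y) (hx : f x + 1 = g x) :
    (∑ y ∈ s, f y) + 1 = ∑ y ∈ s, g y := by
  rw [← Finset.add_sum_erase s f hxs, ← Finset.add_sum_erase s g hxs]
  have he : ∑ y ∈ s.erase x, f y = ∑ y ∈ s.erase x, g y :=
    Finset.sum_congr rfl fun y hy =>
      hfg y (Finset.mem_of_mem_erase hy) (Finset.ne_of_mem_erase hy)
  omega

lemma step_prop {G G' G2 : PreGraph ι L K D} {x : ι} {k : K} {h' : ι → Option ι}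
    (hV : G'.V = G.V) (hE : G'.E = G.E)
    (hlab : G'.lab = G.lab) (hsrc : G'.src = G.src) (htgt : G'.tgt = G.tgt)
    (hprop : ∀ x' k', ¬(x' = x ∧ k' = k) → G'.prop x' k' = G.prop x' k')
    (hpi : IsPartialIso G' G2 h') :
    IsPartialIso G G2 h' ∧ pisoCost G G2 h' ≤ pisoCost G' G2 h' + 1 := by
  obtain ⟨hdom, hinj, hlab', hsrc', htgt'⟩ := hpi
  have hS : G'.V ∪ G'.E = G.V ∪ G.E := by rw [hV, hE]
  constructor
  · refine ⟨?_, hinj, ?_, ?_, ?_⟩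
    · intro a b hab; rw [← hV, ← hE]; exact hdom a b hab
    · intro a b hab; rw [← hlab]; exact hlab' a b hab
    · intro e e' u he hs; exact hsrc' e e' u he (by rw [hsrc]; exact hs)
    · intro e e' u he ht; exact htgt' e e' u he (by rw [htgt]; exact ht)
  · have hA : unmatchedL G h' = unmatchedL G' h' := by
      unfold unmatchedL; rw [hS]
    have hB : unmatchedR G G2 h' = unmatchedR G' G2 h' := by
      unfold unmatchedR; simp only [hS]
    have hmis : ∀ x' y', x' ≠ x → mismatchCount G G2 x' y' = mismatchCount G' G2 x' y' := by
      intro x' y' hx'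
      unfold mismatchCount
      congr 1
      apply Finset.filter_congr
      intro k' _
      rw [hprop x' k' (fun hc => hx' hc.1)]
    have hmis_le : ∀ y', mismatchCount G G2 x y' ≤ mismatchCount G' G2 x y' + 1 := by
      intro y'
      unfold mismatchCount
      apply filter_card_le k
      intro k' hk' hne
      rw [hprop x k' (fun hc => hk' hc.2)]
      exact hne
    have hpOn : ∀ x', x' ≠ x → propsOn G x' = propsOn G' x' := by
      intro x' hx'
      unfold propsOn
      congr 1
      apply Finset.filter_congr
      intro k' _
      rw [hprop x' k' (fun hc => hx' hc.1)]
    have hpOn_le : propsOn G x ≤ propsOn G' x + 1 := by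
      unfold propsOn
      apply filter_card_le k
      intro k' hk' hne
      rw [hprop x k' (fun hc => hk' hc.2)]
      exact hne
    have key : (∑ x' ∈ G.V ∪ G.E, (h' x').elim 0 fun y => mismatchCount G G2 x' y) +
        (∑ x' ∈ unmatchedL G h', propsOn G x') ≤
        ((∑ x' ∈ G.V ∪ G.E, (h' x').elim 0 fun y => mismatchCount G' G2 x' y) +
        (∑ x' ∈ unmatchedL G h', propsOn G' x')) + 1 := by
      by_cases hx : h' x = none
      · have hC : (∑ x' ∈ G.V ∪ G.E, (h' x').elim 0 fun y => mismatchCount G G2 x' y) =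
            ∑ x' ∈ G.V ∪ G.E, (h' x').elim 0 fun y => mismatchCount G' G2 x' y := by
          apply Finset.sum_congr rfl
          intro x' _
          by_cases hxx : x' = x
          · subst hxx; rw [hx]; rfl
          · cases hx' : h' x' with
            | none => rfl
            | some y' => simp only [Option.elim_some]; exact hmis x' y' hxx
        have hD : (∑ x' ∈ unmatchedL G h', propsOn G x') ≤
            (∑ x' ∈ unmatchedL G h', propsOn G' x') + 1 :=
          sum_le_sum_add_one x
            (fun y hy hyx => hpOn y hyx) hpOn_le
        omega
      · have hD : (∑ x' ∈ unmatchedL G h', propsOn G x') =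
            ∑ x' ∈ unmatchedL G h', propsOn G' x' := by
          apply Finset.sum_congr rfl
          intro x' hx'
          have : x' ≠ x := by
            intro hxx
            subst hxx
            exact hx (mem_unmatchedL.mp hx').2
          exact hpOn x' this
        have hC : (∑ x' ∈ G.V ∪ G.E, (h' x').elim 0 fun y => mismatchCount G G2 x' y) ≤
            (∑ x' ∈ G.V ∪ G.E, (h' x').elim 0 fun y => mismatchCount G' G2 x' y) + 1 := by
          apply sum_le_sum_add_one x
          · intro y _ hyx
            cases hy' : h' y with
            | none => rfl
            | some y' => simp only [Option.elim_some]; exact hmis y y' hyx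
          · cases hx' : h' x with
            | none => simp
            | some y' => simp only [Option.elim_some]; exact hmis_le y'
        omega
    rw [hA] at key
    unfold pisoCost
    rw [hA, hB, hS]
    omega

lemma step_insV {G G2 : PreGraph ι L K D} (hG : IsPGraph G) {v : ι} {l : L}
    (hv : v ∉ G.V ∪ G.E) {h' : ι → Option ι}
    (hpi : IsPartialIso (applyOp (EditOp.insV v l) G) G2 h') :
    ∃ h, IsPartialIso G G2 h ∧
      pisoCost G G2 h ≤ pisoCost (applyOp (EditOp.insV v l) G) G2 h' + 1 := by
  obtain ⟨hdom, hinj, hlab, hsrc, htgt⟩ := hpi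
  have hdom' : ∀ x y, h' x = some y →
      (x ∈ insert v G.V ∧ y ∈ G2.V) ∨ (x ∈ G.E ∧ y ∈ G2.E) := hdom
  have hlab' : ∀ x y, h' x = some y →
      G2.lab y = if x = v then some l else G.lab x := hlab
  have hsrc' : ∀ e e' u, h' e = some e' → G.src e = some u → h' u = G2.src e' := hsrc
  have htgt' : ∀ e e' u, h' e = some e' → G.tgt e = some u → h' u = G2.tgt e' := htgt
  have hS' : (applyOp (EditOp.insV v l) G).V ∪ (applyOp (EditOp.insV v l) G).E
      = insert v (G.V ∪ G.E) := Finset.insert_union v G.V G.E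
  have hmm : mismatchCount (applyOp (EditOp.insV v l) G) G2 = mismatchCount G G2 := rfl
  have hpp : propsOn (applyOp (EditOp.insV v l) G) = propsOn G := rfl
  by_cases hcase : h' v = none
  · -- v is unmatched in the larger graph; reuse h'
    refine ⟨h', ⟨?_, hinj, ?_, hsrc', htgt'⟩, ?_⟩
    · intro x y hxy
      have hxv : x ≠ v := by rintro rfl; rw [hcase] at hxy; exact nomatch hxy
      rcases hdom' x y hxy with ⟨hx, hy⟩ | ⟨hx, hy⟩
      · exact Or.inl ⟨Finset.mem_of_mem_insert_of_ne hx hxv, hy⟩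
      · exact Or.inr ⟨hx, hy⟩
    · intro x y hxy
      have hxv : x ≠ v := by rintro rfl; rw [hcase] at hxy; exact nomatch hxy
      have := hlab' x y hxy
      rwa [if_neg hxv] at this
    · -- cost: pisoCost G' = pisoCost G + 1
      have hA : unmatchedL (applyOp (EditOp.insV v l) G) h' = insert v (unmatchedL G h') := by
        ext a
        rw [mem_unmatchedL, Finset.mem_insert, mem_unmatchedL, hS', Finset.mem_insert]
        constructor
        · rintro ⟨rfl | ha, hn⟩
          · exact Or.inl rfl
          · exact Or.inr ⟨ha, hn⟩
        · rintro (rfl | ⟨ha, hn⟩)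
          · exact ⟨Or.inl rfl, hcase⟩
          · exact ⟨Or.inr ha, hn⟩
      have hvL : v ∉ unmatchedL G h' := fun hc => hv (mem_unmatchedL.mp hc).1
      have hB : unmatchedR (applyOp (EditOp.insV v l) G) G2 h' = unmatchedR G G2 h' := by
        ext b
        rw [mem_unmatchedR, mem_unmatchedR, hS']
        constructor
        · rintro ⟨hb, hall⟩
          exact ⟨hb, fun x hx => hall x (Finset.mem_insert_of_mem hx)⟩
        · rintro ⟨hb, hall⟩
          refine ⟨hb, fun x hx => ?_⟩
          rcases Finset.mem_insert.mp hx with rfl | hx'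
          · rw [hcase]; exact fun hc => nomatch hc
          · exact hall x hx'
      have hC : (∑ x ∈ (applyOp (EditOp.insV v l) G).V ∪ (applyOp (EditOp.insV v l) G).E,
          (h' x).elim 0 fun y => mismatchCount (applyOp (EditOp.insV v l) G) G2 x y)
          = ∑ x ∈ G.V ∪ G.E, (h' x).elim 0 fun y => mismatchCount G G2 x y := by
        rw [hS', Finset.sum_insert hv, hcase, hmm]
        simp
      have hD : (∑ x ∈ unmatchedL (applyOp (EditOp.insV v l) G) h',
          propsOn (applyOp (EditOp.insV v l) G) x)
          = ∑ x ∈ unmatchedL G h', propsOn G x := by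
        rw [hA, hpp, Finset.sum_insert hvL,
          propsOn_eq_zero (fun k => prop_none_of_not_mem hG hv k), zero_add]
      unfold pisoCost
      rw [hC, hD, hB, hA, Finset.card_insert_of_notMem hvL]
      omega
  · obtain ⟨y, hy⟩ := Option.ne_none_iff_exists'.mp hcase
    have hyV : y ∈ G2.V := by
      rcases hdom' v y hy with ⟨_, h2⟩ | ⟨h1, _⟩
      · exact h2
      · exact absurd (Finset.mem_union_right G.V h1) hv
    set h : ι → Option ι := fun x => if x = v then none else h' x with hh
    have hhv : h v = none := by simp [hh]
    have hhx : ∀ x, x ≠ v → h x = h' x := by intro x hx; simp [hh, hx]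
    have hSne : ∀ x, x ∈ G.V ∪ G.E → x ≠ v := by rintro x hx rfl; exact hv hx
    refine ⟨h, ⟨?_, ?_, ?_, ?_, ?_⟩, ?_⟩
    · intro x b hxb
      have hxv : x ≠ v := by rintro rfl; rw [hhv] at hxb; exact nomatch hxb
      rw [hhx x hxv] at hxb
      rcases hdom' x b hxb with ⟨hx, hb⟩ | ⟨hx, hb⟩
      · exact Or.inl ⟨Finset.mem_of_mem_insert_of_ne hx hxv, hb⟩
      · exact Or.inr ⟨hx, hb⟩
    · intro x x' b hxb hx'b
      have hxv : x ≠ v := by rintro rfl; rw [hhv] at hxb; exact nomatch hxb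
      have hx'v : x' ≠ v := by rintro rfl; rw [hhv] at hx'b; exact nomatch hx'b
      rw [hhx x hxv] at hxb; rw [hhx x' hx'v] at hx'b
      exact hinj x x' b hxb hx'b
    · intro x b hxb
      have hxv : x ≠ v := by rintro rfl; rw [hhv] at hxb; exact nomatch hxb
      rw [hhx x hxv] at hxb
      have := hlab' x b hxb
      rwa [if_neg hxv] at this
    · intro e e' u hee' hsu
      have hev : e ≠ v := by rintro rfl; rw [hhv] at hee'; exact nomatch hee'
      rw [hhx e hev] at hee'
      have huV : u ∈ G.V := hG.src_mem e u hsu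
      rw [hhx u (hSne u (Finset.mem_union_left _ huV))]
      exact hsrc' e e' u hee' hsu
    · intro e e' u hee' hsu
      have hev : e ≠ v := by rintro rfl; rw [hhv] at hee'; exact nomatch hee'
      rw [hhx e hev] at hee'
      have huV : u ∈ G.V := hG.tgt_mem e u hsu
      rw [hhx u (hSne u (Finset.mem_union_left _ huV))]
      exact htgt' e e' u hee' hsu
    · -- cost
      have hA : unmatchedL G h = unmatchedL (applyOp (EditOp.insV v l) G) h' := by
        ext a
        rw [mem_unmatchedL, mem_unmatchedL, hS', Finset.mem_insert]
        constructor
        · rintro ⟨ha, hn⟩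
          rw [hhx a (hSne a ha)] at hn
          exact ⟨Or.inr ha, hn⟩
        · rintro ⟨rfl | ha, hn⟩
          · rw [hy] at hn; exact absurd hn (by simp)
          · rw [← hhx a (hSne a ha)] at hn
            exact ⟨ha, hn⟩
      have hB : unmatchedR G G2 h = insert y (unmatchedR (applyOp (EditOp.insV v l) G) G2 h') := by
        ext b
        rw [Finset.mem_insert, mem_unmatchedR, mem_unmatchedR, hS']
        constructor
        · rintro ⟨hb, hall⟩
          by_cases hby : b = y
          · exact Or.inl hby
          · refine Or.inr ⟨hb, fun x hx => ?_⟩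
            rcases Finset.mem_insert.mp hx with rfl | hx'
            · rw [hy]; intro hc; exact hby (Option.some_inj.mp hc).symm
            · rw [← hhx x (hSne x hx')]; exact hall x hx'
        · rintro (rfl | ⟨hb, hall⟩)
          · refine ⟨Finset.mem_union_left _ hyV, fun x hx => ?_⟩
            rw [hhx x (hSne x hx)]
            intro hc
            exact hSne x hx (hinj x v b hc hy)
          · refine ⟨hb, fun x hx => ?_⟩
            rw [hhx x (hSne x hx)]
            exact hall x (Finset.mem_insert_of_mem hx)
      have hyR : y ∉ unmatchedR (applyOp (EditOp.insV v l) G) G2 h' := by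
        intro hc
        have := (mem_unmatchedR.mp hc).2 v (by rw [hS']; exact Finset.mem_insert_self v _)
        exact this hy
      have hC : (∑ x ∈ (applyOp (EditOp.insV v l) G).V ∪ (applyOp (EditOp.insV v l) G).E,
            (h' x).elim 0 fun b => mismatchCount (applyOp (EditOp.insV v l) G) G2 x b)
          = propsOn G2 y + ∑ x ∈ G.V ∪ G.E, (h x).elim 0 fun b => mismatchCount G G2 x b := by
        rw [hS', Finset.sum_insert hv, hy, hmm]
        simp only [Option.elim_some]
        rw [mismatch_left_none (fun k => prop_none_of_not_mem hG hv k)]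
        congr 1
        apply Finset.sum_congr rfl
        intro a ha
        rw [hhx a (hSne a ha)]
      have hD : (∑ x ∈ unmatchedL G h, propsOn G x)
          = ∑ x ∈ unmatchedL (applyOp (EditOp.insV v l) G) h',
              propsOn (applyOp (EditOp.insV v l) G) x := by
        rw [hA, hpp]
      have hE : (∑ b ∈ unmatchedR G G2 h, propsOn G2 b)
          = propsOn G2 y + ∑ b ∈ unmatchedR (applyOp (EditOp.insV v l) G) G2 h', propsOn G2 b := by
        rw [hB, Finset.sum_insert hyR]
      unfold pisoCost
      rw [hC, hE, hD, hA, hB, Finset.card_insert_of_notMem hyR, hpp]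
      omega

lemma step_insE {G G2 : PreGraph ι L K D} (hG : IsPGraph G) {e ev ew : ι} {l : L}
    (he : e ∉ G.V ∪ G.E) {h' : ι → Option ι}
    (hpi : IsPartialIso (applyOp (EditOp.insE e ev ew l) G) G2 h') :
    ∃ h, IsPartialIso G G2 h ∧
      pisoCost G G2 h ≤ pisoCost (applyOp (EditOp.insE e ev ew l) G) G2 h' + 1 := by
  obtain ⟨hdom, hinj, hlab, hsrc, htgt⟩ := hpi
  have hdom' : ∀ x y, h' x = some y →
      (x ∈ G.V ∧ y ∈ G2.V) ∨ (x ∈ insert e G.E ∧ y ∈ G2.E) := hdom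
  have hlab' : ∀ x y, h' x = some y →
      G2.lab y = if x = e then some l else G.lab x := hlab
  have hsrc' : ∀ e0 e0' u, h' e0 = some e0' →
      (if e0 = e then some ev else G.src e0) = some u → h' u = G2.src e0' := hsrc
  have htgt' : ∀ e0 e0' u, h' e0 = some e0' →
      (if e0 = e then some ew else G.tgt e0) = some u → h' u = G2.tgt e0' := htgt
  have hS' : (applyOp (EditOp.insE e ev ew l) G).V ∪ (applyOp (EditOp.insE e ev ew l) G).E
      = insert e (G.V ∪ G.E) := Finset.union_insert e G.V G.E
  have hmm : mismatchCount (applyOp (EditOp.insE e ev ew l) G) G2 = mismatchCount G G2 := rfl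
  have hpp : propsOn (applyOp (EditOp.insE e ev ew l) G) = propsOn G := rfl
  by_cases hcase : h' e = none
  · refine ⟨h', ⟨?_, hinj, ?_, ?_, ?_⟩, ?_⟩
    · intro x y hxy
      have hxe : x ≠ e := by rintro rfl; rw [hcase] at hxy; exact nomatch hxy
      rcases hdom' x y hxy with ⟨hx, hy⟩ | ⟨hx, hy⟩
      · exact Or.inl ⟨hx, hy⟩
      · exact Or.inr ⟨Finset.mem_of_mem_insert_of_ne hx hxe, hy⟩
    · intro x y hxy
      have hxe : x ≠ e := by rintro rfl; rw [hcase] at hxy; exact nomatch hxy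
      have := hlab' x y hxy
      rwa [if_neg hxe] at this
    · intro e0 e0' u he0 hsu
      have he0e : e0 ≠ e := by rintro rfl; rw [hcase] at he0; exact nomatch he0
      exact hsrc' e0 e0' u he0 (by rw [if_neg he0e]; exact hsu)
    · intro e0 e0' u he0 hsu
      have he0e : e0 ≠ e := by rintro rfl; rw [hcase] at he0; exact nomatch he0
      exact htgt' e0 e0' u he0 (by rw [if_neg he0e]; exact hsu)
    · have hA : unmatchedL (applyOp (EditOp.insE e ev ew l) G) h' = insert e (unmatchedL G h') := by
        ext a
        rw [mem_unmatchedL, Finset.mem_insert, mem_unmatchedL, hS', Finset.mem_insert]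
        constructor
        · rintro ⟨rfl | ha, hn⟩
          · exact Or.inl rfl
          · exact Or.inr ⟨ha, hn⟩
        · rintro (rfl | ⟨ha, hn⟩)
          · exact ⟨Or.inl rfl, hcase⟩
          · exact ⟨Or.inr ha, hn⟩
      have hvL : e ∉ unmatchedL G h' := fun hc => he (mem_unmatchedL.mp hc).1
      have hB : unmatchedR (applyOp (EditOp.insE e ev ew l) G) G2 h' = unmatchedR G G2 h' := by
        ext b
        rw [mem_unmatchedR, mem_unmatchedR, hS']
        constructor
        · rintro ⟨hb, hall⟩
          exact ⟨hb, fun x hx => hall x (Finset.mem_insert_of_mem hx)⟩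
        · rintro ⟨hb, hall⟩
          refine ⟨hb, fun x hx => ?_⟩
          rcases Finset.mem_insert.mp hx with rfl | hx'
          · rw [hcase]; exact fun hc => nomatch hc
          · exact hall x hx'
      have hC : (∑ x ∈ (applyOp (EditOp.insE e ev ew l) G).V ∪ (applyOp (EditOp.insE e ev ew l) G).E,
          (h' x).elim 0 fun y => mismatchCount (applyOp (EditOp.insE e ev ew l) G) G2 x y)
          = ∑ x ∈ G.V ∪ G.E, (h' x).elim 0 fun y => mismatchCount G G2 x y := by
        rw [hS', Finset.sum_insert he, hcase, hmm]
        simp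
      have hD : (∑ x ∈ unmatchedL (applyOp (EditOp.insE e ev ew l) G) h',
          propsOn (applyOp (EditOp.insE e ev ew l) G) x)
          = ∑ x ∈ unmatchedL G h', propsOn G x := by
        rw [hA, hpp, Finset.sum_insert hvL,
          propsOn_eq_zero (fun k => prop_none_of_not_mem hG he k), zero_add]
      unfold pisoCost
      rw [hC, hD, hB, hA, Finset.card_insert_of_notMem hvL]
      omega
  · obtain ⟨y, hy⟩ := Option.ne_none_iff_exists'.mp hcase
    have hyE : y ∈ G2.E := by
      rcases hdom' e y hy with ⟨h1, _⟩ | ⟨_, h2⟩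
      · exact absurd (Finset.mem_union_left G.E h1) he
      · exact h2
    set h : ι → Option ι := fun x => if x = e then none else h' x with hh
    have hhv : h e = none := by simp [hh]
    have hhx : ∀ x, x ≠ e → h x = h' x := by intro x hx; simp [hh, hx]
    have hSne : ∀ x, x ∈ G.V ∪ G.E → x ≠ e := by rintro x hx rfl; exact he hx
    refine ⟨h, ⟨?_, ?_, ?_, ?_, ?_⟩, ?_⟩
    · intro x b hxb
      have hxe : x ≠ e := by rintro rfl; rw [hhv] at hxb; exact nomatch hxb
      rw [hhx x hxe] at hxb
      rcases hdom' x b hxb with ⟨hx, hb⟩ | ⟨hx, hb⟩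
      · exact Or.inl ⟨hx, hb⟩
      · exact Or.inr ⟨Finset.mem_of_mem_insert_of_ne hx hxe, hb⟩
    · intro x x' b hxb hx'b
      have hxe : x ≠ e := by rintro rfl; rw [hhv] at hxb; exact nomatch hxb
      have hx'e : x' ≠ e := by rintro rfl; rw [hhv] at hx'b; exact nomatch hx'b
      rw [hhx x hxe] at hxb; rw [hhx x' hx'e] at hx'b
      exact hinj x x' b hxb hx'b
    · intro x b hxb
      have hxe : x ≠ e := by rintro rfl; rw [hhv] at hxb; exact nomatch hxb
      rw [hhx x hxe] at hxb
      have := hlab' x b hxb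
      rwa [if_neg hxe] at this
    · intro e0 e0' u hee' hsu
      have he0 : e0 ≠ e := by rintro rfl; rw [hhv] at hee'; exact nomatch hee'
      rw [hhx e0 he0] at hee'
      have huV : u ∈ G.V := hG.src_mem e0 u hsu
      rw [hhx u (hSne u (Finset.mem_union_left _ huV))]
      exact hsrc' e0 e0' u hee' (by rw [if_neg he0]; exact hsu)
    · intro e0 e0' u hee' hsu
      have he0 : e0 ≠ e := by rintro rfl; rw [hhv] at hee'; exact nomatch hee'
      rw [hhx e0 he0] at hee'
      have huV : u ∈ G.V := hG.tgt_mem e0 u hsu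
      rw [hhx u (hSne u (Finset.mem_union_left _ huV))]
      exact htgt' e0 e0' u hee' (by rw [if_neg he0]; exact hsu)
    · have hA : unmatchedL G h = unmatchedL (applyOp (EditOp.insE e ev ew l) G) h' := by
        ext a
        rw [mem_unmatchedL, mem_unmatchedL, hS', Finset.mem_insert]
        constructor
        · rintro ⟨ha, hn⟩
          rw [hhx a (hSne a ha)] at hn
          exact ⟨Or.inr ha, hn⟩
        · rintro ⟨rfl | ha, hn⟩
          · rw [hy] at hn; exact absurd hn (by simp)
          · rw [← hhx a (hSne a ha)] at hn
            exact ⟨ha, hn⟩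
      have hB : unmatchedR G G2 h
          = insert y (unmatchedR (applyOp (EditOp.insE e ev ew l) G) G2 h') := by
        ext b
        rw [Finset.mem_insert, mem_unmatchedR, mem_unmatchedR, hS']
        constructor
        · rintro ⟨hb, hall⟩
          by_cases hby : b = y
          · exact Or.inl hby
          · refine Or.inr ⟨hb, fun x hx => ?_⟩
            rcases Finset.mem_insert.mp hx with rfl | hx'
            · rw [hy]; intro hc; exact hby (Option.some_inj.mp hc).symm
            · rw [← hhx x (hSne x hx')]; exact hall x hx'
        · rintro (rfl | ⟨hb, hall⟩)
          · refine ⟨Finset.mem_union_right _ hyE, fun x hx => ?_⟩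
            rw [hhx x (hSne x hx)]
            intro hc
            exact hSne x hx (hinj x e b hc hy)
          · refine ⟨hb, fun x hx => ?_⟩
            rw [hhx x (hSne x hx)]
            exact hall x (Finset.mem_insert_of_mem hx)
      have hyR : y ∉ unmatchedR (applyOp (EditOp.insE e ev ew l) G) G2 h' := by
        intro hc
        have := (mem_unmatchedR.mp hc).2 e (by rw [hS']; exact Finset.mem_insert_self e _)
        exact this hy
      have hC : (∑ x ∈ (applyOp (EditOp.insE e ev ew l) G).V ∪ (applyOp (EditOp.insE e ev ew l) G).E,
            (h' x).elim 0 fun b => mismatchCount (applyOp (EditOp.insE e ev ew l) G) G2 x b)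
          = propsOn G2 y + ∑ x ∈ G.V ∪ G.E, (h x).elim 0 fun b => mismatchCount G G2 x b := by
        rw [hS', Finset.sum_insert he, hy, hmm]
        simp only [Option.elim_some]
        rw [mismatch_left_none (fun k => prop_none_of_not_mem hG he k)]
        congr 1
        apply Finset.sum_congr rfl
        intro a ha
        rw [hhx a (hSne a ha)]
      have hD : (∑ x ∈ unmatchedL G h, propsOn G x)
          = ∑ x ∈ unmatchedL (applyOp (EditOp.insE e ev ew l) G) h',
              propsOn (applyOp (EditOp.insE e ev ew l) G) x := by
        rw [hA, hpp]
      have hE : (∑ b ∈ unmatchedR G G2 h, propsOn G2 b)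
          = propsOn G2 y
            + ∑ b ∈ unmatchedR (applyOp (EditOp.insE e ev ew l) G) G2 h', propsOn G2 b := by
        rw [hB, Finset.sum_insert hyR]
      unfold pisoCost
      rw [hC, hE, hD, hA, hB, Finset.card_insert_of_notMem hyR, hpp]
      omega

lemma step_delV {G G2 : PreGraph ι L K D} (hG : IsPGraph G) {v : ι}
    (hv : v ∈ G.V) (hprops : ∀ k, G.prop v k = none) {h' : ι → Option ι}
    (hpi : IsPartialIso (applyOp (EditOp.delV v) G) G2 h') :
    ∃ h, IsPartialIso G G2 h ∧
      pisoCost G G2 h ≤ pisoCost (applyOp (EditOp.delV v) G) G2 h' + 1 := by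
  obtain ⟨hdom, hinj, hlab, hsrc, htgt⟩ := hpi
  have hdom' : ∀ x y, h' x = some y →
      (x ∈ G.V.erase v ∧ y ∈ G2.V) ∨ (x ∈ G.E ∧ y ∈ G2.E) := hdom
  have hlab' : ∀ x y, h' x = some y →
      G2.lab y = if x = v then none else G.lab x := hlab
  have hsrc' : ∀ e e' u, h' e = some e' → G.src e = some u → h' u = G2.src e' := hsrc
  have htgt' : ∀ e e' u, h' e = some e' → G.tgt e = some u → h' u = G2.tgt e' := htgt
  have hvE : v ∉ G.E := Finset.disjoint_left.mp hG.disj hv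
  have hvS : v ∈ G.V ∪ G.E := Finset.mem_union_left _ hv
  have hS' : (applyOp (EditOp.delV v) G).V ∪ (applyOp (EditOp.delV v) G).E
      = (G.V ∪ G.E).erase v := by
    show G.V.erase v ∪ G.E = (G.V ∪ G.E).erase v
    rw [Finset.erase_union_distrib, Finset.erase_eq_of_notMem hvE]
  have hmm : mismatchCount (applyOp (EditOp.delV v) G) G2 = mismatchCount G G2 := rfl
  have hpp : propsOn (applyOp (EditOp.delV v) G) = propsOn G := rfl
  have hnone : h' v = none := by
    cases hc : h' v with
    | none => rfl
    | some y =>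
      rcases hdom' v y hc with ⟨h1, _⟩ | ⟨h1, _⟩
      · exact absurd rfl (Finset.mem_erase.mp h1).1
      · exact absurd h1 hvE
  refine ⟨h', ⟨?_, hinj, ?_, hsrc', htgt'⟩, ?_⟩
  · intro x y hxy
    rcases hdom' x y hxy with ⟨hx, hy⟩ | ⟨hx, hy⟩
    · exact Or.inl ⟨Finset.mem_of_mem_erase hx, hy⟩
    · exact Or.inr ⟨hx, hy⟩
  · intro x y hxy
    have hxv : x ≠ v := by rintro rfl; rw [hnone] at hxy; exact nomatch hxy
    have := hlab' x y hxy
    rwa [if_neg hxv] at this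
  · have hA : unmatchedL G h' = insert v (unmatchedL (applyOp (EditOp.delV v) G) h') := by
      ext a
      rw [mem_unmatchedL, Finset.mem_insert, mem_unmatchedL, hS', Finset.mem_erase]
      constructor
      · rintro ⟨ha, hn⟩
        by_cases hav : a = v
        · exact Or.inl hav
        · exact Or.inr ⟨⟨hav, ha⟩, hn⟩
      · rintro (rfl | ⟨⟨hav, ha⟩, hn⟩)
        · exact ⟨hvS, hnone⟩
        · exact ⟨ha, hn⟩
    have hvL : v ∉ unmatchedL (applyOp (EditOp.delV v) G) h' := by
      intro hc
      have := (mem_unmatchedL.mp hc).1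
      rw [hS'] at this
      exact (Finset.mem_erase.mp this).1 rfl
    have hB : unmatchedR G G2 h' = unmatchedR (applyOp (EditOp.delV v) G) G2 h' := by
      ext b
      rw [mem_unmatchedR, mem_unmatchedR, hS']
      constructor
      · rintro ⟨hb, hall⟩
        exact ⟨hb, fun x hx => hall x (Finset.mem_of_mem_erase hx)⟩
      · rintro ⟨hb, hall⟩
        refine ⟨hb, fun x hx => ?_⟩
        by_cases hxv : x = v
        · subst hxv; rw [hnone]; exact fun hc => nomatch hc
        · exact hall x (Finset.mem_erase.mpr ⟨hxv, hx⟩)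
    have hC : (∑ x ∈ G.V ∪ G.E, (h' x).elim 0 fun y => mismatchCount G G2 x y)
        = ∑ x ∈ (applyOp (EditOp.delV v) G).V ∪ (applyOp (EditOp.delV v) G).E,
            (h' x).elim 0 fun y => mismatchCount (applyOp (EditOp.delV v) G) G2 x y := by
      rw [hS', hmm, ← Finset.add_sum_erase _ _ hvS, hnone]
      simp
    have hD : (∑ x ∈ unmatchedL G h', propsOn G x)
        = ∑ x ∈ unmatchedL (applyOp (EditOp.delV v) G) h',
            propsOn (applyOp (EditOp.delV v) G) x := by
      rw [hA, hpp, Finset.sum_insert hvL, propsOn_eq_zero hprops, zero_add]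
    unfold pisoCost
    rw [hC, hD, hB, hA, Finset.card_insert_of_notMem hvL]
    omega

lemma step_delE {G G2 : PreGraph ι L K D} (hG : IsPGraph G) {e : ι}
    (he : e ∈ G.E) (hprops : ∀ k, G.prop e k = none) {h' : ι → Option ι}
    (hpi : IsPartialIso (applyOp (EditOp.delE e) G) G2 h') :
    ∃ h, IsPartialIso G G2 h ∧
      pisoCost G G2 h ≤ pisoCost (applyOp (EditOp.delE e) G) G2 h' + 1 := by
  obtain ⟨hdom, hinj, hlab, hsrc, htgt⟩ := hpi
  have hdom' : ∀ x y, h' x = some y →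
      (x ∈ G.V ∧ y ∈ G2.V) ∨ (x ∈ G.E.erase e ∧ y ∈ G2.E) := hdom
  have hlab' : ∀ x y, h' x = some y →
      G2.lab y = if x = e then none else G.lab x := hlab
  have hsrc' : ∀ e0 e0' u, h' e0 = some e0' →
      (if e0 = e then none else G.src e0) = some u → h' u = G2.src e0' := hsrc
  have htgt' : ∀ e0 e0' u, h' e0 = some e0' →
      (if e0 = e then none else G.tgt e0) = some u → h' u = G2.tgt e0' := htgt
  have heV : e ∉ G.V := Finset.disjoint_right.mp hG.disj he
  have heS : e ∈ G.V ∪ G.E := Finset.mem_union_right _ he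
  have hS' : (applyOp (EditOp.delE e) G).V ∪ (applyOp (EditOp.delE e) G).E
      = (G.V ∪ G.E).erase e := by
    show G.V ∪ G.E.erase e = (G.V ∪ G.E).erase e
    rw [Finset.erase_union_distrib, Finset.erase_eq_of_notMem heV]
  have hmm : mismatchCount (applyOp (EditOp.delE e) G) G2 = mismatchCount G G2 := rfl
  have hpp : propsOn (applyOp (EditOp.delE e) G) = propsOn G := rfl
  have hnone : h' e = none := by
    cases hc : h' e with
    | none => rfl
    | some y =>
      rcases hdom' e y hc with ⟨h1, _⟩ | ⟨h1, _⟩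
      · exact absurd h1 heV
      · exact absurd rfl (Finset.mem_erase.mp h1).1
  refine ⟨h', ⟨?_, hinj, ?_, ?_, ?_⟩, ?_⟩
  · intro x y hxy
    rcases hdom' x y hxy with ⟨hx, hy⟩ | ⟨hx, hy⟩
    · exact Or.inl ⟨hx, hy⟩
    · exact Or.inr ⟨Finset.mem_of_mem_erase hx, hy⟩
  · intro x y hxy
    have hxe : x ≠ e := by rintro rfl; rw [hnone] at hxy; exact nomatch hxy
    have := hlab' x y hxy
    rwa [if_neg hxe] at this
  · intro e0 e0' u hee' hsu
    have he0 : e0 ≠ e := by rintro rfl; rw [hnone] at hee'; exact nomatch hee'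
    exact hsrc' e0 e0' u hee' (by rw [if_neg he0]; exact hsu)
  · intro e0 e0' u hee' hsu
    have he0 : e0 ≠ e := by rintro rfl; rw [hnone] at hee'; exact nomatch hee'
    exact htgt' e0 e0' u hee' (by rw [if_neg he0]; exact hsu)
  · have hA : unmatchedL G h' = insert e (unmatchedL (applyOp (EditOp.delE e) G) h') := by
      ext a
      rw [mem_unmatchedL, Finset.mem_insert, mem_unmatchedL, hS', Finset.mem_erase]
      constructor
      · rintro ⟨ha, hn⟩
        by_cases hae : a = e
        · exact Or.inl hae
        · exact Or.inr ⟨⟨hae, ha⟩, hn⟩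
      · rintro (rfl | ⟨⟨hae, ha⟩, hn⟩)
        · exact ⟨heS, hnone⟩
        · exact ⟨ha, hn⟩
    have hvL : e ∉ unmatchedL (applyOp (EditOp.delE e) G) h' := by
      intro hc
      have := (mem_unmatchedL.mp hc).1
      rw [hS'] at this
      exact (Finset.mem_erase.mp this).1 rfl
    have hB : unmatchedR G G2 h' = unmatchedR (applyOp (EditOp.delE e) G) G2 h' := by
      ext b
      rw [mem_unmatchedR, mem_unmatchedR, hS']
      constructor
      · rintro ⟨hb, hall⟩
        exact ⟨hb, fun x hx => hall x (Finset.mem_of_mem_erase hx)⟩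
      · rintro ⟨hb, hall⟩
        refine ⟨hb, fun x hx => ?_⟩
        by_cases hxe : x = e
        · subst hxe; rw [hnone]; exact fun hc => nomatch hc
        · exact hall x (Finset.mem_erase.mpr ⟨hxe, hx⟩)
    have hC : (∑ x ∈ G.V ∪ G.E, (h' x).elim 0 fun y => mismatchCount G G2 x y)
        = ∑ x ∈ (applyOp (EditOp.delE e) G).V ∪ (applyOp (EditOp.delE e) G).E,
            (h' x).elim 0 fun y => mismatchCount (applyOp (EditOp.delE e) G) G2 x y := by
      rw [hS', hmm, ← Finset.add_sum_erase _ _ heS, hnone]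
      simp
    have hD : (∑ x ∈ unmatchedL G h', propsOn G x)
        = ∑ x ∈ unmatchedL (applyOp (EditOp.delE e) G) h',
            propsOn (applyOp (EditOp.delE e) G) x := by
      rw [hA, hpp, Finset.sum_insert hvL, propsOn_eq_zero hprops, zero_add]
    unfold pisoCost
    rw [hC, hD, hB, hA, Finset.card_insert_of_notMem hvL]
    omega

lemma step_bound {G G2 : PreGraph ι L K D} (hG : IsPGraph G) {op : EditOp ι L K D}
    (hap : Applicable op G) {h' : ι → Option ι}
    (hpi : IsPartialIso (applyOp op G) G2 h') :
    ∃ h, IsPartialIso G G2 h ∧ pisoCost G G2 h ≤ pisoCost (applyOp op G) G2 h' + 1 := by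
  cases op with
  | insV v l => exact step_insV hG hap hpi
  | insE e v w l => exact step_insE hG hap.2.2 hpi
  | insP x k d =>
    obtain ⟨h1, h2⟩ := step_prop (G := G) (G' := applyOp (EditOp.insP x k d) G) (x := x) (k := k)
      rfl rfl rfl rfl rfl (fun x' k' hne => if_neg hne) hpi
    exact ⟨h', h1, h2⟩
  | delV v => exact step_delV hG hap.1 hap.2.2 hpi
  | delE e => exact step_delE hG hap.1 hap.2 hpi
  | delP x k =>
    obtain ⟨h1, h2⟩ := step_prop (G := G) (G' := applyOp (EditOp.delP x k) G) (x := x) (k := k)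
      rfl rfl rfl rfl rfl (fun x' k' hne => if_neg hne) hpi
    exact ⟨h', h1, h2⟩
  | updP x k d =>
    obtain ⟨h1, h2⟩ := step_prop (G := G) (G' := applyOp (EditOp.updP x k d) G) (x := x) (k := k)
      rfl rfl rfl rfl rfl (fun x' k' hne => if_neg hne) hpi
    exact ⟨h', h1, h2⟩

lemma applyScript_isPGraph : ∀ (ops : List (EditOp ι L K D)) (G : PreGraph ι L K D),
    IsPGraph G → ValidScript G ops → IsPGraph (applyScript ops G) := by
  intro ops
  induction ops with
  | nil => intro G hG _; exact hG
  | cons op rest ih =>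
    intro G hG hvs
    cases hvs with
    | cons hap hvs' => exact ih (applyOp op G) (applyOp_isPGraph hG hap) hvs'

lemma script_bound {G2 : PreGraph ι L K D} :
    ∀ (ops : List (EditOp ι L K D)) (G : PreGraph ι L K D), IsPGraph G → ValidScript G ops →
    ∀ h' : ι → Option ι, IsPartialIso (applyScript ops G) G2 h' →
    ∃ h, IsPartialIso G G2 h ∧
      pisoCost G G2 h ≤ pisoCost (applyScript ops G) G2 h' + ops.length := by
  intro ops
  induction ops with
  | nil =>
    intro G hG _ h' hpi
    exact ⟨h', hpi, by simp [applyScript]⟩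
  | cons op rest ih =>
    intro G hG hvs h' hpi
    cases hvs with
    | cons hap hvs' =>
      have happ : applyScript (op :: rest) G = applyScript rest (applyOp op G) := rfl
      rw [happ] at hpi
      obtain ⟨h1, hpi1, hc1⟩ := ih (applyOp op G) (applyOp_isPGraph hG hap) hvs' h' hpi
      obtain ⟨h0, hpi0, hc0⟩ := step_bound hG hap hpi1
      refine ⟨h0, hpi0, ?_⟩
      rw [happ, List.length_cons]
      omega

lemma cost_prop_aux {G G' G2 : PreGraph ι L K D} {x : ι} {k : K} {h : ι → Option ι}
    (hV : G'.V = G.V) (hE : G'.E = G.E)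
    (hprop : ∀ x' k', ¬(x' = x ∧ k' = k) → G'.prop x' k' = G.prop x' k') :
    unmatchedL G' h = unmatchedL G h ∧ unmatchedR G' G2 h = unmatchedR G G2 h ∧
    (∀ x' y', x' ≠ x → mismatchCount G' G2 x' y' = mismatchCount G G2 x' y') ∧
    (∀ x', x' ≠ x → propsOn G' x' = propsOn G x') ∧
    G'.V ∪ G'.E = G.V ∪ G.E := by
  have hS : G'.V ∪ G'.E = G.V ∪ G.E := by rw [hV, hE]
  refine ⟨by unfold unmatchedL; rw [hS], by unfold unmatchedR; simp only [hS], ?_, ?_, hS⟩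
  · intro x' y' hx'
    unfold mismatchCount
    congr 1
    apply Finset.filter_congr
    intro k' _
    rw [hprop x' k' (fun hc => hx' hc.1)]
  · intro x' hx'
    unfold propsOn
    congr 1
    apply Finset.filter_congr
    intro k' _
    rw [hprop x' k' (fun hc => hx' hc.1)]

lemma cost_prop_change_unmatched {G G' G2 : PreGraph ι L K D} {x : ι} {k : K}
    {h : ι → Option ι}
    (hV : G'.V = G.V) (hE : G'.E = G.E)
    (hprop : ∀ x' k', ¬(x' = x ∧ k' = k) → G'.prop x' k' = G.prop x' k')
    (hxS : x ∈ G.V ∪ G.E) (hxn : h x = none)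
    (hdec : propsOn G' x + 1 = propsOn G x) :
    pisoCost G' G2 h + 1 = pisoCost G G2 h := by
  obtain ⟨hA, hB, hmisO, hpOnO, hS⟩ := cost_prop_aux (G2 := G2) (h := h) hV hE hprop
  have hC : (∑ x' ∈ G.V ∪ G.E, (h x').elim 0 fun y => mismatchCount G' G2 x' y)
      = ∑ x' ∈ G.V ∪ G.E, (h x').elim 0 fun y => mismatchCount G G2 x' y := by
    apply Finset.sum_congr rfl
    intro x' _
    cases hx' : h x' with
    | none => rfl
    | some y' =>
      have hne : x' ≠ x := by rintro rfl; rw [hxn] at hx'; exact nomatch hx'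
      simp only [Option.elim_some]
      exact hmisO x' y' hne
  have hxL : x ∈ unmatchedL G h := mem_unmatchedL.mpr ⟨hxS, hxn⟩
  have hD : (∑ x' ∈ unmatchedL G h, propsOn G' x') + 1
      = ∑ x' ∈ unmatchedL G h, propsOn G x' :=
    sum_add_one_eq hxL (fun y _ hyx => hpOnO y hyx) hdec
  unfold pisoCost
  rw [hA, hB, hS, hC]
  omega

lemma cost_prop_change_matched {G G' G2 : PreGraph ι L K D} {x y : ι} {k : K}
    {h : ι → Option ι}
    (hV : G'.V = G.V) (hE : G'.E = G.E)
    (hprop : ∀ x' k', ¬(x' = x ∧ k' = k) → G'.prop x' k' = G.prop x' k')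
    (hxS : x ∈ G.V ∪ G.E) (hxy : h x = some y)
    (hdec : mismatchCount G' G2 x y + 1 = mismatchCount G G2 x y) :
    pisoCost G' G2 h + 1 = pisoCost G G2 h := by
  obtain ⟨hA, hB, hmisO, hpOnO, hS⟩ := cost_prop_aux (G2 := G2) (h := h) hV hE hprop
  have hD : (∑ x' ∈ unmatchedL G h, propsOn G' x')
      = ∑ x' ∈ unmatchedL G h, propsOn G x' := by
    apply Finset.sum_congr rfl
    intro x' hx'
    have hne : x' ≠ x := by
      rintro rfl
      rw [(mem_unmatchedL.mp hx').2] at hxy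
      exact nomatch hxy
    exact hpOnO x' hne
  have hC : (∑ x' ∈ G.V ∪ G.E, (h x').elim 0 fun b => mismatchCount G' G2 x' b) + 1
      = ∑ x' ∈ G.V ∪ G.E, (h x').elim 0 fun b => mismatchCount G G2 x' b := by
    apply sum_add_one_eq hxS
    · intro x' _ hne
      cases hx' : h x' with
      | none => rfl
      | some y' =>
        simp only [Option.elim_some]
        exact hmisO x' y' hne
    · rw [hxy]
      simp only [Option.elim_some]
      exact hdec
  unfold pisoCost
  rw [hA, hB, hS, hD]
  omega

lemma exists_decrease {G1 G2 : PreGraph ι L K D} (hG1 : IsPGraph G1) (hG2 : IsPGraph G2)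
    {h : ι → Option ι} (hpi : IsPartialIso G1 G2 h) (hpos : 0 < pisoCost G1 G2 h) :
    ∃ (op : EditOp ι L K D) (h' : ι → Option ι), Applicable op G1 ∧
      IsPartialIso (applyOp op G1) G2 h' ∧
      pisoCost (applyOp op G1) G2 h' + 1 = pisoCost G1 G2 h := by
  obtain ⟨hdom, hinj, hlab, hsrc, htgt⟩ := hpi
  have hdomS : ∀ x y, h x = some y → x ∈ G1.V ∪ G1.E ∧ y ∈ G2.V ∪ G2.E := by
    intro x y hxy
    rcases hdom x y hxy with ⟨h1, h2⟩ | ⟨h1, h2⟩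
    · exact ⟨Finset.mem_union_left _ h1, Finset.mem_union_left _ h2⟩
    · exact ⟨Finset.mem_union_right _ h1, Finset.mem_union_right _ h2⟩
  by_cases c1 : ∃ x k, x ∈ unmatchedL G1 h ∧ (G1.prop x k).isSome
  · obtain ⟨x, k, hxu, hk⟩ := c1
    obtain ⟨hxS, hxn⟩ := mem_unmatchedL.mp hxu
    refine ⟨EditOp.delP x k, h, hk, ⟨hdom, hinj, hlab, hsrc, htgt⟩, ?_⟩
    apply cost_prop_change_unmatched (G := G1) (G' := applyOp (EditOp.delP x k) G1)
      (x := x) (k := k) rfl rfl (fun x' k' hne => if_neg hne) hxS hxn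
    unfold propsOn
    refine filter_card_succ k ?_ ?_ hk
    · intro k' hk'
      have hp : (applyOp (EditOp.delP x k) G1).prop x k' = G1.prop x k' :=
        if_neg (fun hc => hk' hc.2)
      rw [hp]
    · have hp : (applyOp (EditOp.delP x k) G1).prop x k = none := if_pos ⟨rfl, rfl⟩
      rw [hp]; simp
  · by_cases c2 : ∃ x y k, h x = some y ∧ (G1.prop x k).isSome ∧ G2.prop y k = none
    · obtain ⟨x, y, k, hxy, hk1, hk2⟩ := c2
      have hxS : x ∈ G1.V ∪ G1.E := (hdomS x y hxy).1
      refine ⟨EditOp.delP x k, h, hk1, ⟨hdom, hinj, hlab, hsrc, htgt⟩, ?_⟩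
      apply cost_prop_change_matched (G := G1) (G' := applyOp (EditOp.delP x k) G1)
        (x := x) (k := k) rfl rfl (fun x' k' hne => if_neg hne) hxS hxy
      unfold mismatchCount
      refine filter_card_succ k ?_ ?_ ?_
      · intro k' hk'
        have hp : (applyOp (EditOp.delP x k) G1).prop x k' = G1.prop x k' :=
          if_neg (fun hc => hk' hc.2)
        rw [hp]
      · have hp : (applyOp (EditOp.delP x k) G1).prop x k = none := if_pos ⟨rfl, rfl⟩
        rw [hp, hk2]
        simp
      · obtain ⟨d, hd⟩ := Option.isSome_iff_exists.mp hk1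
        rw [hd, hk2]
        simp
    · by_cases c3 : ∃ x y k d1 d2, h x = some y ∧ G1.prop x k = some d1 ∧
          G2.prop y k = some d2 ∧ d1 ≠ d2
      · obtain ⟨x, y, k, d1, d2, hxy, hd1, hd2, hne12⟩ := c3
        have hxS : x ∈ G1.V ∪ G1.E := (hdomS x y hxy).1
        refine ⟨EditOp.updP x k d2, h, (show (G1.prop x k).isSome by rw [hd1]; rfl),
          ⟨hdom, hinj, hlab, hsrc, htgt⟩, ?_⟩
        apply cost_prop_change_matched (G := G1) (G' := applyOp (EditOp.updP x k d2) G1)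
          (x := x) (k := k) rfl rfl (fun x' k' hne => if_neg hne) hxS hxy
        unfold mismatchCount
        refine filter_card_succ k ?_ ?_ ?_
        · intro k' hk'
          have hp : (applyOp (EditOp.updP x k d2) G1).prop x k' = G1.prop x k' :=
            if_neg (fun hc => hk' hc.2)
          rw [hp]
        · have hp : (applyOp (EditOp.updP x k d2) G1).prop x k = some d2 := if_pos ⟨rfl, rfl⟩
          rw [hp, hd2]
          simp
        · rw [hd1, hd2]
          simp [hne12]
      · by_cases c4 : ∃ e, e ∈ unmatchedL G1 h ∧ e ∈ G1.E
        · obtain ⟨e, heu, heE⟩ := c4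
          have hnone : h e = none := (mem_unmatchedL.mp heu).2
          have heS : e ∈ G1.V ∪ G1.E := Finset.mem_union_right _ heE
          have heV : e ∉ G1.V := Finset.disjoint_right.mp hG1.disj heE
          have hprops : ∀ k, G1.prop e k = none := by
            intro k
            cases hp : G1.prop e k with
            | none => rfl
            | some d => exact absurd ⟨e, k, heu, by rw [hp]; rfl⟩ c1
          have hS' : (applyOp (EditOp.delE e) G1).V ∪ (applyOp (EditOp.delE e) G1).E
              = (G1.V ∪ G1.E).erase e := by
            show G1.V ∪ G1.E.erase e = (G1.V ∪ G1.E).erase e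
            rw [Finset.erase_union_distrib, Finset.erase_eq_of_notMem heV]
          have hmm : mismatchCount (applyOp (EditOp.delE e) G1) G2 = mismatchCount G1 G2 := rfl
          have hpp : propsOn (applyOp (EditOp.delE e) G1) = propsOn G1 := rfl
          refine ⟨EditOp.delE e, h, ⟨heE, hprops⟩, ⟨?_, hinj, ?_, ?_, ?_⟩, ?_⟩
          · intro a b hab
            have hae : a ≠ e := by rintro rfl; rw [hnone] at hab; exact nomatch hab
            rcases hdom a b hab with ⟨h1, h2⟩ | ⟨h1, h2⟩
            · exact Or.inl ⟨h1, h2⟩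
            · exact Or.inr ⟨Finset.mem_erase.mpr ⟨hae, h1⟩, h2⟩
          · intro a b hab
            have hae : a ≠ e := by rintro rfl; rw [hnone] at hab; exact nomatch hab
            have hl : (applyOp (EditOp.delE e) G1).lab a = G1.lab a := if_neg hae
            rw [hl]
            exact hlab a b hab
          · intro e0 e0' u he0 hsu
            have he0e : e0 ≠ e := by rintro rfl; rw [hnone] at he0; exact nomatch he0
            have hs : (applyOp (EditOp.delE e) G1).src e0 = G1.src e0 := if_neg he0e
            rw [hs] at hsu
            exact hsrc e0 e0' u he0 hsu
          · intro e0 e0' u he0 hsu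
            have he0e : e0 ≠ e := by rintro rfl; rw [hnone] at he0; exact nomatch he0
            have hs : (applyOp (EditOp.delE e) G1).tgt e0 = G1.tgt e0 := if_neg he0e
            rw [hs] at hsu
            exact htgt e0 e0' u he0 hsu
          · have hA : unmatchedL G1 h = insert e (unmatchedL (applyOp (EditOp.delE e) G1) h) := by
              ext a
              rw [mem_unmatchedL, Finset.mem_insert, mem_unmatchedL, hS', Finset.mem_erase]
              constructor
              · rintro ⟨ha, hn⟩
                by_cases hae : a = e
                · exact Or.inl hae
                · exact Or.inr ⟨⟨hae, ha⟩, hn⟩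
              · rintro (rfl | ⟨⟨hae, ha⟩, hn⟩)
                · exact ⟨heS, hnone⟩
                · exact ⟨ha, hn⟩
            have hvL : e ∉ unmatchedL (applyOp (EditOp.delE e) G1) h := by
              intro hc
              have := (mem_unmatchedL.mp hc).1
              rw [hS'] at this
              exact (Finset.mem_erase.mp this).1 rfl
            have hB : unmatchedR G1 G2 h = unmatchedR (applyOp (EditOp.delE e) G1) G2 h := by
              ext b
              rw [mem_unmatchedR, mem_unmatchedR, hS']
              constructor
              · rintro ⟨hb, hall⟩
                exact ⟨hb, fun x hx => hall x (Finset.mem_of_mem_erase hx)⟩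
              · rintro ⟨hb, hall⟩
                refine ⟨hb, fun x hx => ?_⟩
                by_cases hxe : x = e
                · subst hxe; rw [hnone]; exact fun hc => nomatch hc
                · exact hall x (Finset.mem_erase.mpr ⟨hxe, hx⟩)
            have hC : (∑ x ∈ G1.V ∪ G1.E, (h x).elim 0 fun y => mismatchCount G1 G2 x y)
                = ∑ x ∈ (applyOp (EditOp.delE e) G1).V ∪ (applyOp (EditOp.delE e) G1).E,
                    (h x).elim 0 fun y => mismatchCount (applyOp (EditOp.delE e) G1) G2 x y := by
              rw [hS', hmm, ← Finset.add_sum_erase _ _ heS, hnone]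
              simp
            have hD : (∑ x ∈ unmatchedL G1 h, propsOn G1 x)
                = ∑ x ∈ unmatchedL (applyOp (EditOp.delE e) G1) h,
                    propsOn (applyOp (EditOp.delE e) G1) x := by
              rw [hA, hpp, Finset.sum_insert hvL, propsOn_eq_zero hprops, zero_add]
            unfold pisoCost
            rw [hC, hD, hB, hA, Finset.card_insert_of_notMem hvL]
            omega
        · by_cases c5 : ∃ v, v ∈ unmatchedL G1 h ∧ v ∈ G1.V
          · obtain ⟨v, hvu, hvV⟩ := c5
            have hnone : h v = none := (mem_unmatchedL.mp hvu).2
            have hvS : v ∈ G1.V ∪ G1.E := Finset.mem_union_left _ hvV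
            have hvE : v ∉ G1.E := Finset.disjoint_left.mp hG1.disj hvV
            have hprops : ∀ k, G1.prop v k = none := by
              intro k
              cases hp : G1.prop v k with
              | none => rfl
              | some d => exact absurd ⟨v, k, hvu, by rw [hp]; rfl⟩ c1
            have hinc : ∀ e0 ∈ G1.E, G1.src e0 ≠ some v ∧ G1.tgt e0 ≠ some v := by
              intro e0 he0
              constructor
              · intro hc
                cases hoe : h e0 with
                | none =>
                  exact c4 ⟨e0, mem_unmatchedL.mpr ⟨Finset.mem_union_right _ he0, hoe⟩, he0⟩
                | some e0' =>
                  rcases hdom e0 e0' hoe with ⟨h1, _⟩ | ⟨_, h2⟩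
                  · exact Finset.disjoint_left.mp hG1.disj h1 he0
                  · have := hsrc e0 e0' v hoe hc
                    rw [hnone] at this
                    have hsome := (hG2.src_dom e0').mpr h2
                    rw [← this] at hsome
                    simp at hsome
              · intro hc
                cases hoe : h e0 with
                | none =>
                  exact c4 ⟨e0, mem_unmatchedL.mpr ⟨Finset.mem_union_right _ he0, hoe⟩, he0⟩
                | some e0' =>
                  rcases hdom e0 e0' hoe with ⟨h1, _⟩ | ⟨_, h2⟩
                  · exact Finset.disjoint_left.mp hG1.disj h1 he0
                  · have := htgt e0 e0' v hoe hc
                    rw [hnone] at this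
                    have hsome := (hG2.tgt_dom e0').mpr h2
                    rw [← this] at hsome
                    simp at hsome
            have hS' : (applyOp (EditOp.delV v) G1).V ∪ (applyOp (EditOp.delV v) G1).E
                = (G1.V ∪ G1.E).erase v := by
              show G1.V.erase v ∪ G1.E = (G1.V ∪ G1.E).erase v
              rw [Finset.erase_union_distrib, Finset.erase_eq_of_notMem hvE]
            have hmm : mismatchCount (applyOp (EditOp.delV v) G1) G2 = mismatchCount G1 G2 := rfl
            have hpp : propsOn (applyOp (EditOp.delV v) G1) = propsOn G1 := rfl
            refine ⟨EditOp.delV v, h, ⟨hvV, hinc, hprops⟩, ⟨?_, hinj, ?_, hsrc, htgt⟩, ?_⟩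
            · intro a b hab
              have hav : a ≠ v := by rintro rfl; rw [hnone] at hab; exact nomatch hab
              rcases hdom a b hab with ⟨h1, h2⟩ | ⟨h1, h2⟩
              · exact Or.inl ⟨Finset.mem_erase.mpr ⟨hav, h1⟩, h2⟩
              · exact Or.inr ⟨h1, h2⟩
            · intro a b hab
              have hav : a ≠ v := by rintro rfl; rw [hnone] at hab; exact nomatch hab
              have hl : (applyOp (EditOp.delV v) G1).lab a = G1.lab a := if_neg hav
              rw [hl]
              exact hlab a b hab
            · have hA : unmatchedL G1 h
                  = insert v (unmatchedL (applyOp (EditOp.delV v) G1) h) := by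
                ext a
                rw [mem_unmatchedL, Finset.mem_insert, mem_unmatchedL, hS', Finset.mem_erase]
                constructor
                · rintro ⟨ha, hn⟩
                  by_cases hav : a = v
                  · exact Or.inl hav
                  · exact Or.inr ⟨⟨hav, ha⟩, hn⟩
                · rintro (rfl | ⟨⟨hav, ha⟩, hn⟩)
                  · exact ⟨hvS, hnone⟩
                  · exact ⟨ha, hn⟩
              have hvL : v ∉ unmatchedL (applyOp (EditOp.delV v) G1) h := by
                intro hc
                have := (mem_unmatchedL.mp hc).1
                rw [hS'] at this
                exact (Finset.mem_erase.mp this).1 rfl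
              have hB : unmatchedR G1 G2 h = unmatchedR (applyOp (EditOp.delV v) G1) G2 h := by
                ext b
                rw [mem_unmatchedR, mem_unmatchedR, hS']
                constructor
                · rintro ⟨hb, hall⟩
                  exact ⟨hb, fun x hx => hall x (Finset.mem_of_mem_erase hx)⟩
                · rintro ⟨hb, hall⟩
                  refine ⟨hb, fun x hx => ?_⟩
                  by_cases hxv : x = v
                  · subst hxv; rw [hnone]; exact fun hc => nomatch hc
                  · exact hall x (Finset.mem_erase.mpr ⟨hxv, hx⟩)
              have hC : (∑ x ∈ G1.V ∪ G1.E, (h x).elim 0 fun y => mismatchCount G1 G2 x y)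
                  = ∑ x ∈ (applyOp (EditOp.delV v) G1).V ∪ (applyOp (EditOp.delV v) G1).E,
                      (h x).elim 0 fun y => mismatchCount (applyOp (EditOp.delV v) G1) G2 x y := by
                rw [hS', hmm, ← Finset.add_sum_erase _ _ hvS, hnone]
                simp
              have hD : (∑ x ∈ unmatchedL G1 h, propsOn G1 x)
                  = ∑ x ∈ unmatchedL (applyOp (EditOp.delV v) G1) h,
                      propsOn (applyOp (EditOp.delV v) G1) x := by
                rw [hA, hpp, Finset.sum_insert hvL, propsOn_eq_zero hprops, zero_add]
              unfold pisoCost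
              rw [hC, hD, hB, hA, Finset.card_insert_of_notMem hvL]
              omega
          · by_cases c6 : ∃ x y k d, h x = some y ∧ G1.prop x k = none ∧ G2.prop y k = some d
            · obtain ⟨x, y, k, d, hxy, hk1, hk2⟩ := c6
              have hxS : x ∈ G1.V ∪ G1.E := (hdomS x y hxy).1
              refine ⟨EditOp.insP x k d, h, ⟨hxS, hk1⟩,
                ⟨hdom, hinj, hlab, hsrc, htgt⟩, ?_⟩
              apply cost_prop_change_matched (G := G1) (G' := applyOp (EditOp.insP x k d) G1)
                (x := x) (k := k) rfl rfl (fun x' k' hne => if_neg hne) hxS hxy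
              unfold mismatchCount
              refine filter_card_succ k ?_ ?_ ?_
              · intro k' hk'
                have hp : (applyOp (EditOp.insP x k d) G1).prop x k' = G1.prop x k' :=
                  if_neg (fun hc => hk' hc.2)
                rw [hp]
              · have hp : (applyOp (EditOp.insP x k d) G1).prop x k = some d := if_pos ⟨rfl, rfl⟩
                rw [hp, hk2]
                simp
              · rw [hk1, hk2]
                simp
            · by_cases c7 : ∃ y, y ∈ unmatchedR G1 G2 h ∧ y ∈ G2.V
              · obtain ⟨y, hyu, hyV⟩ := c7
                obtain ⟨hyS2, hynm⟩ := mem_unmatchedR.mp hyu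
                have hLe : unmatchedL G1 h = ∅ := by
                  apply Finset.eq_empty_of_forall_notMem
                  intro a ha
                  rcases Finset.mem_union.mp (mem_unmatchedL.mp ha).1 with h1 | h1
                  · exact c5 ⟨a, ha, h1⟩
                  · exact c4 ⟨a, ha, h1⟩
                have hmatched : ∀ x ∈ G1.V ∪ G1.E, (h x).isSome := by
                  intro x hx
                  rw [Option.isSome_iff_ne_none]
                  intro hn
                  have : x ∈ unmatchedL G1 h := mem_unmatchedL.mpr ⟨hx, hn⟩
                  rw [hLe] at this
                  exact absurd this (Finset.notMem_empty x)
                have hcard : (G1.V ∪ G1.E).card < (G2.V ∪ G2.E).card := by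
                  have hmaps : ∀ x ∈ G1.V ∪ G1.E, (h x).getD x ∈ (G2.V ∪ G2.E).erase y := by
                    intro x hx
                    obtain ⟨b, hb⟩ := Option.isSome_iff_exists.mp (hmatched x hx)
                    rw [hb]
                    simp only [Option.getD_some]
                    refine Finset.mem_erase.mpr ⟨?_, (hdomS x b hb).2⟩
                    rintro rfl
                    exact hynm x hx hb
                  have hinj2 : Set.InjOn (fun x => (h x).getD x) ↑(G1.V ∪ G1.E) := by
                    intro a ha b hb hab
                    obtain ⟨a1, ha1⟩ := Option.isSome_iff_exists.mp (hmatched a (Finset.mem_coe.mp ha))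
                    obtain ⟨b1, hb1⟩ := Option.isSome_iff_exists.mp (hmatched b (Finset.mem_coe.mp hb))
                    simp only [ha1, hb1, Option.getD_some] at hab
                    exact hinj a b a1 ha1 (by rw [hb1, hab])
                  calc (G1.V ∪ G1.E).card ≤ ((G2.V ∪ G2.E).erase y).card :=
                      Finset.card_le_card_of_injOn _ hmaps hinj2
                    _ < (G2.V ∪ G2.E).card := Finset.card_erase_lt_of_mem hyS2
                have hfresh : ∃ v, v ∉ G1.V ∪ G1.E := by
                  by_contra hc
                  push_neg at hc
                  have hsub : G2.V ∪ G2.E ⊆ G1.V ∪ G1.E := fun a _ => hc a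
                  have := Finset.card_le_card hsub
                  omega
                obtain ⟨v, hv⟩ := hfresh
                obtain ⟨l, hl⟩ := Option.isSome_iff_exists.mp ((hG2.lab_dom y).mpr hyS2)
                set h' : ι → Option ι := fun x => if x = v then some y else h x with hh'
                have hveq : h' v = some y := by simp [hh']
                have hne : ∀ x, x ≠ v → h' x = h x := by intro x hx; simp [hh', hx]
                have hSne : ∀ x, x ∈ G1.V ∪ G1.E → x ≠ v := by rintro x hx rfl; exact hv hx
                have hS' : (applyOp (EditOp.insV v l) G1).V ∪ (applyOp (EditOp.insV v l) G1).E
                    = insert v (G1.V ∪ G1.E) := Finset.insert_union v G1.V G1.E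
                have hmm : mismatchCount (applyOp (EditOp.insV v l) G1) G2
                    = mismatchCount G1 G2 := rfl
                have hpp : propsOn (applyOp (EditOp.insV v l) G1) = propsOn G1 := rfl
                refine ⟨EditOp.insV v l, h', hv, ⟨?_, ?_, ?_, ?_, ?_⟩, ?_⟩
                · intro a b hab
                  by_cases hav : a = v
                  · subst hav
                    rw [hveq] at hab
                    injection hab with hab'
                    subst hab'
                    exact Or.inl ⟨Finset.mem_insert_self a G1.V, hyV⟩
                  · rw [hne a hav] at hab
                    rcases hdom a b hab with ⟨h1, h2⟩ | ⟨h1, h2⟩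
                    · exact Or.inl ⟨Finset.mem_insert_of_mem h1, h2⟩
                    · exact Or.inr ⟨h1, h2⟩
                · intro a a' b ha ha'
                  by_cases hav : a = v <;> by_cases hav' : a' = v
                  · rw [hav, hav']
                  · subst hav
                    rw [hveq] at ha
                    injection ha with ha2
                    subst ha2
                    rw [hne a' hav'] at ha'
                    exact absurd ha' (hynm a' (hdomS a' y ha').1)
                  · subst hav'
                    rw [hveq] at ha'
                    injection ha' with ha2
                    subst ha2
                    rw [hne a hav] at ha
                    exact absurd ha (hynm a (hdomS a y ha).1)
                  · rw [hne a hav] at ha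
                    rw [hne a' hav'] at ha'
                    exact hinj a a' b ha ha'
                · intro a b hab
                  by_cases hav : a = v
                  · subst hav
                    rw [hveq] at hab
                    injection hab with hab'
                    subst hab'
                    have hla : (applyOp (EditOp.insV a l) G1).lab a = some l := if_pos rfl
                    rw [hla, hl]
                  · rw [hne a hav] at hab
                    have hla : (applyOp (EditOp.insV v l) G1).lab a = G1.lab a := if_neg hav
                    rw [hla]
                    exact hlab a b hab
                · intro e0 e0' u he0 hsu
                  have hsu' : G1.src e0 = some u := hsu
                  by_cases he0v : e0 = v
                  · subst he0v
                    have : G1.src e0 = none := by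
                      cases hq : G1.src e0 with
                      | none => rfl
                      | some w =>
                        have : e0 ∈ G1.E := (hG1.src_dom e0).mp (by rw [hq]; rfl)
                        exact absurd (Finset.mem_union_right _ this) hv
                    rw [this] at hsu'
                    exact nomatch hsu'
                  · rw [hne e0 he0v] at he0
                    have huV : u ∈ G1.V := hG1.src_mem e0 u hsu'
                    rw [hne u (hSne u (Finset.mem_union_left _ huV))]
                    exact hsrc e0 e0' u he0 hsu'
                · intro e0 e0' u he0 hsu
                  have hsu' : G1.tgt e0 = some u := hsu
                  by_cases he0v : e0 = v
                  · subst he0v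
                    have : G1.tgt e0 = none := by
                      cases hq : G1.tgt e0 with
                      | none => rfl
                      | some w =>
                        have : e0 ∈ G1.E := (hG1.tgt_dom e0).mp (by rw [hq]; rfl)
                        exact absurd (Finset.mem_union_right _ this) hv
                    rw [this] at hsu'
                    exact nomatch hsu'
                  · rw [hne e0 he0v] at he0
                    have huV : u ∈ G1.V := hG1.tgt_mem e0 u hsu'
                    rw [hne u (hSne u (Finset.mem_union_left _ huV))]
                    exact htgt e0 e0' u he0 hsu'
                · have hA : unmatchedL (applyOp (EditOp.insV v l) G1) h' = unmatchedL G1 h := by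
                    ext a
                    rw [mem_unmatchedL, mem_unmatchedL, hS', Finset.mem_insert]
                    constructor
                    · rintro ⟨rfl | ha, hn⟩
                      · rw [hveq] at hn
                        exact absurd hn (by simp)
                      · rw [hne a (hSne a ha)] at hn
                        exact ⟨ha, hn⟩
                    · rintro ⟨ha, hn⟩
                      refine ⟨Or.inr ha, ?_⟩
                      rw [hne a (hSne a ha)]
                      exact hn
                  have hB : unmatchedR (applyOp (EditOp.insV v l) G1) G2 h'
                      = (unmatchedR G1 G2 h).erase y := by
                    ext b
                    rw [mem_unmatchedR, Finset.mem_erase, mem_unmatchedR, hS']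
                    constructor
                    · rintro ⟨hb, hall⟩
                      refine ⟨?_, hb, fun x hx => ?_⟩
                      · rintro rfl
                        exact hall v (Finset.mem_insert_self v _) hveq
                      · rw [← hne x (hSne x hx)]
                        exact hall x (Finset.mem_insert_of_mem hx)
                    · rintro ⟨hby, hb, hall⟩
                      refine ⟨hb, fun x hx => ?_⟩
                      rcases Finset.mem_insert.mp hx with rfl | hx'
                      · rw [hveq]
                        intro hc
                        injection hc with hc'
                        exact hby hc'.symm
                      · rw [hne x (hSne x hx')]
                        exact hall x hx'
                  have hC : (∑ x ∈ (applyOp (EditOp.insV v l) G1).V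
                        ∪ (applyOp (EditOp.insV v l) G1).E,
                        (h' x).elim 0 fun b => mismatchCount (applyOp (EditOp.insV v l) G1) G2 x b)
                      = propsOn G2 y
                        + ∑ x ∈ G1.V ∪ G1.E, (h x).elim 0 fun b => mismatchCount G1 G2 x b := by
                    rw [hS', Finset.sum_insert hv, hveq, hmm]
                    simp only [Option.elim_some]
                    rw [mismatch_left_none (fun k => prop_none_of_not_mem hG1 hv k)]
                    congr 1
                    apply Finset.sum_congr rfl
                    intro a ha
                    rw [hne a (hSne a ha)]
                  have hD : (∑ x ∈ unmatchedL (applyOp (EditOp.insV v l) G1) h',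
                        propsOn (applyOp (EditOp.insV v l) G1) x)
                      = ∑ x ∈ unmatchedL G1 h, propsOn G1 x := by
                    rw [hA, hpp]
                  have hEs : propsOn G2 y + ∑ b ∈ (unmatchedR G1 G2 h).erase y, propsOn G2 b
                      = ∑ b ∈ unmatchedR G1 G2 h, propsOn G2 b :=
                    Finset.add_sum_erase _ _ hyu
                  have hBc : 1 ≤ (unmatchedR G1 G2 h).card := Finset.card_pos.mpr ⟨y, hyu⟩
                  unfold pisoCost
                  rw [hC, hD, hA, hB, Finset.card_erase_of_mem hyu]
                  omega
              · by_cases c8 : ∃ y, y ∈ unmatchedR G1 G2 h ∧ y ∈ G2.E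
                · obtain ⟨y, hyu, hyE⟩ := c8
                  obtain ⟨hyS2, hynm⟩ := mem_unmatchedR.mp hyu
                  have hLe : unmatchedL G1 h = ∅ := by
                    apply Finset.eq_empty_of_forall_notMem
                    intro a ha
                    rcases Finset.mem_union.mp (mem_unmatchedL.mp ha).1 with h1 | h1
                    · exact c5 ⟨a, ha, h1⟩
                    · exact c4 ⟨a, ha, h1⟩
                  have hmatched : ∀ x ∈ G1.V ∪ G1.E, (h x).isSome := by
                    intro x hx
                    rw [Option.isSome_iff_ne_none]
                    intro hn
                    have : x ∈ unmatchedL G1 h := mem_unmatchedL.mpr ⟨hx, hn⟩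
                    rw [hLe] at this
                    exact absurd this (Finset.notMem_empty x)
                  have hcard : (G1.V ∪ G1.E).card < (G2.V ∪ G2.E).card := by
                    have hmaps : ∀ x ∈ G1.V ∪ G1.E, (h x).getD x ∈ (G2.V ∪ G2.E).erase y := by
                      intro x hx
                      obtain ⟨b, hb⟩ := Option.isSome_iff_exists.mp (hmatched x hx)
                      rw [hb]
                      simp only [Option.getD_some]
                      refine Finset.mem_erase.mpr ⟨?_, (hdomS x b hb).2⟩
                      rintro rfl
                      exact hynm x hx hb
                    have hinj2 : Set.InjOn (fun x => (h x).getD x) ↑(G1.V ∪ G1.E) := by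
                      intro a ha b hb hab
                      obtain ⟨a1, ha1⟩ := Option.isSome_iff_exists.mp (hmatched a (Finset.mem_coe.mp ha))
                      obtain ⟨b1, hb1⟩ := Option.isSome_iff_exists.mp (hmatched b (Finset.mem_coe.mp hb))
                      simp only [ha1, hb1, Option.getD_some] at hab
                      exact hinj a b a1 ha1 (by rw [hb1, hab])
                    calc (G1.V ∪ G1.E).card ≤ ((G2.V ∪ G2.E).erase y).card :=
                        Finset.card_le_card_of_injOn _ hmaps hinj2
                      _ < (G2.V ∪ G2.E).card := Finset.card_erase_lt_of_mem hyS2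
                  have hfresh : ∃ e, e ∉ G1.V ∪ G1.E := by
                    by_contra hc
                    push_neg at hc
                    have hsub : G2.V ∪ G2.E ⊆ G1.V ∪ G1.E := fun a _ => hc a
                    have := Finset.card_le_card hsub
                    omega
                  obtain ⟨e, he⟩ := hfresh
                  obtain ⟨l, hl⟩ := Option.isSome_iff_exists.mp ((hG2.lab_dom y).mpr hyS2)
                  obtain ⟨sy, hsy⟩ := Option.isSome_iff_exists.mp ((hG2.src_dom y).mpr hyE)
                  obtain ⟨ty, hty⟩ := Option.isSome_iff_exists.mp ((hG2.tgt_dom y).mpr hyE)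
                  have hsyV : sy ∈ G2.V := hG2.src_mem y sy hsy
                  have htyV : ty ∈ G2.V := hG2.tgt_mem y ty hty
                  have hxs : ∃ x ∈ G1.V ∪ G1.E, h x = some sy := by
                    by_contra hc
                    push_neg at hc
                    exact c7 ⟨sy, mem_unmatchedR.mpr
                      ⟨Finset.mem_union_left _ hsyV, fun x hx => hc x hx⟩, hsyV⟩
                  have hxt : ∃ x ∈ G1.V ∪ G1.E, h x = some ty := by
                    by_contra hc
                    push_neg at hc
                    exact c7 ⟨ty, mem_unmatchedR.mpr
                      ⟨Finset.mem_union_left _ htyV, fun x hx => hc x hx⟩, htyV⟩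
                  obtain ⟨xs, hxsS, hxsm⟩ := hxs
                  obtain ⟨xt, hxtS, hxtm⟩ := hxt
                  have hxsV : xs ∈ G1.V := by
                    rcases hdom xs sy hxsm with ⟨h1, _⟩ | ⟨_, h2⟩
                    · exact h1
                    · exact absurd h2 (Finset.disjoint_left.mp hG2.disj hsyV)
                  have hxtV : xt ∈ G1.V := by
                    rcases hdom xt ty hxtm with ⟨h1, _⟩ | ⟨_, h2⟩
                    · exact h1
                    · exact absurd h2 (Finset.disjoint_left.mp hG2.disj htyV)
                  set h' : ι → Option ι := fun x => if x = e then some y else h x with hh'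
                  have hveq : h' e = some y := by simp [hh']
                  have hne : ∀ x, x ≠ e → h' x = h x := by intro x hx; simp [hh', hx]
                  have hSne : ∀ x, x ∈ G1.V ∪ G1.E → x ≠ e := by rintro x hx rfl; exact he hx
                  have hS' : (applyOp (EditOp.insE e xs xt l) G1).V
                      ∪ (applyOp (EditOp.insE e xs xt l) G1).E
                      = insert e (G1.V ∪ G1.E) := Finset.union_insert e G1.V G1.E
                  have hmm : mismatchCount (applyOp (EditOp.insE e xs xt l) G1) G2
                      = mismatchCount G1 G2 := rfl
                  have hpp : propsOn (applyOp (EditOp.insE e xs xt l) G1) = propsOn G1 := rfl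
                  refine ⟨EditOp.insE e xs xt l, h', ⟨hxsV, hxtV, he⟩, ⟨?_, ?_, ?_, ?_, ?_⟩, ?_⟩
                  · intro a b hab
                    by_cases hae : a = e
                    · subst hae
                      rw [hveq] at hab
                      injection hab with hab'
                      subst hab'
                      exact Or.inr ⟨Finset.mem_insert_self a G1.E, hyE⟩
                    · rw [hne a hae] at hab
                      rcases hdom a b hab with ⟨h1, h2⟩ | ⟨h1, h2⟩
                      · exact Or.inl ⟨h1, h2⟩
                      · exact Or.inr ⟨Finset.mem_insert_of_mem h1, h2⟩
                  · intro a a' b ha ha'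
                    by_cases hae : a = e <;> by_cases hae' : a' = e
                    · rw [hae, hae']
                    · subst hae
                      rw [hveq] at ha
                      injection ha with ha2
                      subst ha2
                      rw [hne a' hae'] at ha'
                      exact absurd ha' (hynm a' (hdomS a' y ha').1)
                    · subst hae'
                      rw [hveq] at ha'
                      injection ha' with ha2
                      subst ha2
                      rw [hne a hae] at ha
                      exact absurd ha (hynm a (hdomS a y ha).1)
                    · rw [hne a hae] at ha
                      rw [hne a' hae'] at ha'
                      exact hinj a a' b ha ha'
                  · intro a b hab
                    by_cases hae : a = e
                    · subst hae
                      rw [hveq] at hab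
                      injection hab with hab'
                      subst hab'
                      have hla : (applyOp (EditOp.insE a xs xt l) G1).lab a = some l := if_pos rfl
                      rw [hla, hl]
                    · rw [hne a hae] at hab
                      have hla : (applyOp (EditOp.insE e xs xt l) G1).lab a = G1.lab a :=
                        if_neg hae
                      rw [hla]
                      exact hlab a b hab
                  · intro e0 e0' u he0 hsu
                    by_cases he0e : e0 = e
                    · subst he0e
                      rw [hveq] at he0
                      injection he0 with he0'
                      subst he0'
                      have hse : (applyOp (EditOp.insE e0 xs xt l) G1).src e0 = some xs :=
                        if_pos rfl
                      rw [hse] at hsu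
                      injection hsu with hsu'
                      subst hsu'
                      rw [hsy, hne xs (hSne xs (Finset.mem_union_left _ hxsV))]
                      exact hxsm
                    · have hse : (applyOp (EditOp.insE e xs xt l) G1).src e0 = G1.src e0 :=
                        if_neg he0e
                      rw [hse] at hsu
                      rw [hne e0 he0e] at he0
                      have huV : u ∈ G1.V := hG1.src_mem e0 u hsu
                      rw [hne u (hSne u (Finset.mem_union_left _ huV))]
                      exact hsrc e0 e0' u he0 hsu
                  · intro e0 e0' u he0 hsu
                    by_cases he0e : e0 = e
                    · subst he0e
                      rw [hveq] at he0
                      injection he0 with he0'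
                      subst he0'
                      have hse : (applyOp (EditOp.insE e0 xs xt l) G1).tgt e0 = some xt :=
                        if_pos rfl
                      rw [hse] at hsu
                      injection hsu with hsu'
                      subst hsu'
                      rw [hty, hne xt (hSne xt (Finset.mem_union_left _ hxtV))]
                      exact hxtm
                    · have hse : (applyOp (EditOp.insE e xs xt l) G1).tgt e0 = G1.tgt e0 :=
                        if_neg he0e
                      rw [hse] at hsu
                      rw [hne e0 he0e] at he0
                      have huV : u ∈ G1.V := hG1.tgt_mem e0 u hsu
                      rw [hne u (hSne u (Finset.mem_union_left _ huV))]
                      exact htgt e0 e0' u he0 hsu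
                  · have hA : unmatchedL (applyOp (EditOp.insE e xs xt l) G1) h'
                        = unmatchedL G1 h := by
                      ext a
                      rw [mem_unmatchedL, mem_unmatchedL, hS', Finset.mem_insert]
                      constructor
                      · rintro ⟨rfl | ha, hn⟩
                        · rw [hveq] at hn
                          exact absurd hn (by simp)
                        · rw [hne a (hSne a ha)] at hn
                          exact ⟨ha, hn⟩
                      · rintro ⟨ha, hn⟩
                        refine ⟨Or.inr ha, ?_⟩
                        rw [hne a (hSne a ha)]
                        exact hn
                    have hB : unmatchedR (applyOp (EditOp.insE e xs xt l) G1) G2 h'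
                        = (unmatchedR G1 G2 h).erase y := by
                      ext b
                      rw [mem_unmatchedR, Finset.mem_erase, mem_unmatchedR, hS']
                      constructor
                      · rintro ⟨hb, hall⟩
                        refine ⟨?_, hb, fun x hx => ?_⟩
                        · rintro rfl
                          exact hall e (Finset.mem_insert_self e _) hveq
                        · rw [← hne x (hSne x hx)]
                          exact hall x (Finset.mem_insert_of_mem hx)
                      · rintro ⟨hby, hb, hall⟩
                        refine ⟨hb, fun x hx => ?_⟩
                        rcases Finset.mem_insert.mp hx with rfl | hx'
                        · rw [hveq]
                          intro hc
                          injection hc with hc'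
                          exact hby hc'.symm
                        · rw [hne x (hSne x hx')]
                          exact hall x hx'
                    have hC : (∑ x ∈ (applyOp (EditOp.insE e xs xt l) G1).V
                          ∪ (applyOp (EditOp.insE e xs xt l) G1).E,
                          (h' x).elim 0 fun b =>
                            mismatchCount (applyOp (EditOp.insE e xs xt l) G1) G2 x b)
                        = propsOn G2 y
                          + ∑ x ∈ G1.V ∪ G1.E, (h x).elim 0 fun b => mismatchCount G1 G2 x b := by
                      rw [hS', Finset.sum_insert he, hveq, hmm]
                      simp only [Option.elim_some]
                      rw [mismatch_left_none (fun k => prop_none_of_not_mem hG1 he k)]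
                      congr 1
                      apply Finset.sum_congr rfl
                      intro a ha
                      rw [hne a (hSne a ha)]
                    have hD : (∑ x ∈ unmatchedL (applyOp (EditOp.insE e xs xt l) G1) h',
                          propsOn (applyOp (EditOp.insE e xs xt l) G1) x)
                        = ∑ x ∈ unmatchedL G1 h, propsOn G1 x := by
                      rw [hA, hpp]
                    have hEs : propsOn G2 y + ∑ b ∈ (unmatchedR G1 G2 h).erase y, propsOn G2 b
                        = ∑ b ∈ unmatchedR G1 G2 h, propsOn G2 b :=
                      Finset.add_sum_erase _ _ hyu
                    have hBc : 1 ≤ (unmatchedR G1 G2 h).card := Finset.card_pos.mpr ⟨y, hyu⟩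
                    unfold pisoCost
                    rw [hC, hD, hA, hB, Finset.card_erase_of_mem hyu]
                    omega
                · exfalso
                  have hA0 : unmatchedL G1 h = ∅ := by
                    apply Finset.eq_empty_of_forall_notMem
                    intro a ha
                    rcases Finset.mem_union.mp (mem_unmatchedL.mp ha).1 with h1 | h1
                    · exact c5 ⟨a, ha, h1⟩
                    · exact c4 ⟨a, ha, h1⟩
                  have hB0 : unmatchedR G1 G2 h = ∅ := by
                    apply Finset.eq_empty_of_forall_notMem
                    intro b hb
                    rcases Finset.mem_union.mp (mem_unmatchedR.mp hb).1 with h1 | h1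
                    · exact c7 ⟨b, hb, h1⟩
                    · exact c8 ⟨b, hb, h1⟩
                  have hC0 : (∑ x ∈ G1.V ∪ G1.E, (h x).elim 0 fun y => mismatchCount G1 G2 x y)
                      = 0 := by
                    apply Finset.sum_eq_zero
                    intro x hx
                    cases hxo : h x with
                    | none => rfl
                    | some y =>
                      simp only [Option.elim_some]
                      rw [mismatchCount_eq_zero_iff]
                      intro k
                      cases hp1 : G1.prop x k with
                      | none =>
                        cases hp2 : G2.prop y k with
                        | none => rfl
                        | some d => exact absurd ⟨x, y, k, d, hxo, hp1, hp2⟩ c6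
                      | some d1 =>
                        cases hp2 : G2.prop y k with
                        | none => exact absurd ⟨x, y, k, hxo, by rw [hp1]; rfl, hp2⟩ c2
                        | some d2 =>
                          by_cases hdd : d1 = d2
                          · rw [hdd]
                          · exact absurd ⟨x, y, k, d1, d2, hxo, hp1, hp2, hdd⟩ c3
                  unfold pisoCost at hpos
                  rw [hA0, hB0, hC0] at hpos
                  simp at hpos

lemma exists_script {G2 : PreGraph ι L K D} (hG2 : IsPGraph G2) :
    ∀ (n : ℕ) (G1 : PreGraph ι L K D), IsPGraph G1 →
    ∀ h : ι → Option ι, IsPartialIso G1 G2 h → pisoCost G1 G2 h = n →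
    ∃ ops : List (EditOp ι L K D), ValidScript G1 ops ∧
      (∃ f : ι → ι, IsIso (applyScript ops G1) G2 f) ∧ ops.length ≤ n := by
  intro n
  induction n using Nat.strong_induction_on with
  | _ n ih =>
    intro G1 hG1 h hpi hc
    by_cases h0 : n = 0
    · subst h0
      obtain ⟨f, hf⟩ := iso_of_piso_cost_zero hG1 hG2 hpi hc
      exact ⟨[], ValidScript.nil G1, ⟨f, hf⟩, by simp⟩
    · obtain ⟨op, h', hap, hpi', hdec⟩ := exists_decrease hG1 hG2 hpi (by omega)
      rw [hc] at hdec
      obtain ⟨ops, hvs, hiso, hlen⟩ :=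
        ih (pisoCost (applyOp op G1) G2 h') (by omega) (applyOp op G1)
          (applyOp_isPGraph hG1 hap) h' hpi' rfl
      refine ⟨op :: ops, ValidScript.cons hap hvs, hiso, ?_⟩
      simp only [List.length_cons]
      omega

lemma empty_piso (G1 G2 : PreGraph ι L K D) :
    IsPartialIso G1 G2 (fun _ => none) := by
  refine ⟨?_, ?_, ?_, ?_, ?_⟩
  · intro x y hxy; exact absurd hxy (by simp)
  · intro x x' y hxy _; exact absurd hxy (by simp)
  · intro x y hxy; exact absurd hxy (by simp)
  · intro e e' v he _; exact absurd he (by simp)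
  · intro e e' v he _; exact absurd he (by simp)

end Proofs

/-- the graph edit distance equals the minimum cost over all
partial isomorphisms between the two graphs (this minimum exists, since the
empty partial map is a partial isomorphism). -/
theorem ged_eq_min_pisoCost
    [DecidableEq ι] [DecidableEq K] [DecidableEq D] [Fintype K]
    (G1 G2 : PreGraph ι L K D) (hG1 : IsPGraph G1) (hG2 : IsPGraph G2) :
    {n : ℕ | ∃ h : ι → Option ι, IsPartialIso G1 G2 h ∧ pisoCost G1 G2 h = n}.Nonempty ∧
    GED G1 G2 =
      sInf {n : ℕ | ∃ h : ι → Option ι, IsPartialIso G1 G2 h ∧ pisoCost G1 G2 h = n} := by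
  have hne : {n : ℕ | ∃ h : ι → Option ι, IsPartialIso G1 G2 h ∧ pisoCost G1 G2 h = n}.Nonempty :=
    ⟨pisoCost G1 G2 (fun _ => none), (fun _ => none), empty_piso G1 G2, rfl⟩
  refine ⟨hne, ?_⟩
  obtain ⟨hmin, hpimin, hcost⟩ := Nat.sInf_mem hne
  obtain ⟨ops, hvs, hiso, hlen⟩ := exists_script hG2 _ G1 hG1 hmin hpimin hcost
  have hGEDne : (GEDSet G1 G2).Nonempty := ⟨ops.length, ops, hvs, hiso, rfl⟩
  have hged_le : GED G1 G2 ≤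
      sInf {n : ℕ | ∃ h : ι → Option ι, IsPartialIso G1 G2 h ∧ pisoCost G1 G2 h = n} := by
    calc GED G1 G2 ≤ ops.length := Nat.sInf_le ⟨ops, hvs, hiso, rfl⟩
      _ ≤ _ := hlen
  obtain ⟨ops2, hvs2, ⟨f, hiso2⟩, hlen2⟩ := Nat.sInf_mem hGEDne
  have hfinal : IsPGraph (applyScript ops2 G1) := applyScript_isPGraph ops2 G1 hG1 hvs2
  obtain ⟨h2, hpi2, hc2⟩ := piso_of_iso hfinal hG2 hiso2
  obtain ⟨h3, hpi3, hc3⟩ := script_bound ops2 G1 hG1 hvs2 h2 hpi2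
  have hle : sInf {n : ℕ | ∃ h : ι → Option ι, IsPartialIso G1 G2 h ∧ pisoCost G1 G2 h = n}
      ≤ pisoCost G1 G2 h3 := Nat.sInf_le ⟨h3, hpi3, rfl⟩
  have : pisoCost G1 G2 h3 ≤ GED G1 G2 := by
    rw [hc2] at hc3
    unfold GED
    omega
  omega
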